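/- arXiv:1401.2186 — 3 statements merged into one kernel-verified Lean document; each statement's English description precedes it below -/
import Mathlib

section
/- Let (μ, (f_i)_{i∈Z_N}) be a monic system on K_N = (Z_N)^ℕ, i.e., μ is a finite Borel measure with μ∘σ_i^{-1} ≪ μ and d(μ∘σ_i^{-1})/dμ = |f_i|² for functions f_i ∈ L²(μ) with f_i(x) ≠ 0 for μ-a.e. x in σ_i(K_N). Then μ∘σ^{-1} ≪ μ and the Radon–Nikodym derivative d(μ∘σ^{-1})/dμ equals the sum over j ∈ Z_N of χ_{σ_j(K_N)}/|f_j∘σ_j|². -/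
open MeasureTheory ENNReal

noncomputable section

abbrev Word (N : ℕ) := ℕ → Fin N

/-- The left shift `σ` deleting the first letter. -/
def shift {N : ℕ} (ω : Word N) : Word N := fun n => ω (n + 1)

/-- The map `σ_i` prepending the letter `i`. -/
def prepend {N : ℕ} (i : Fin N) (ω : Word N) : Word N :=
  fun n => match n with
  | 0 => i
  | n + 1 => ω n

/-- The cylinder set determined by a finite word. -/
def cyl {N : ℕ} (w : List (Fin N)) : Set (Word N) :=
  {ω | ∀ k : Fin w.length, ω k = w.get k}

lemma measurable_shift {N : ℕ} : Measurable (shift (N := N)) :=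
  measurable_pi_lambda _ fun n => measurable_pi_apply _

lemma measurable_prepend {N : ℕ} (i : Fin N) : Measurable (prepend i) :=
  measurable_pi_lambda _ fun n => by
    cases n with
    | zero => exact measurable_const
    | succ n => exact measurable_pi_apply _

lemma shift_prepend {N : ℕ} (i : Fin N) (x : Word N) : shift (prepend i x) = x := by
  funext n; rfl

lemma mem_cyl_single {N : ℕ} (j : Fin N) (ω : Word N) : ω ∈ cyl [j] ↔ ω 0 = j := by
  constructor
  · intro h
    exact h ⟨0, by simp⟩
  · intro h k
    fin_cases k
    exact h

lemma prepend_mem_cyl {N : ℕ} (j : Fin N) (x : Word N) : prepend j x ∈ cyl [j] := by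
  rw [mem_cyl_single]; rfl

lemma cyl_eq {N : ℕ} (j : Fin N) : cyl [j] = (fun ω : Word N => ω 0) ⁻¹' {j} := by
  ext ω; simp [mem_cyl_single]

lemma measurableSet_cyl_single {N : ℕ} (j : Fin N) : MeasurableSet (cyl [j]) := by
  rw [cyl_eq]
  exact (measurable_pi_apply 0) (measurableSet_singleton j)

theorem monicSystem_shift_ac_rnDeriv {N : ℕ} (hN : 2 ≤ N)
    (μ : Measure (Word N)) [IsFiniteMeasure μ] (f : Fin N → Word N → ℂ)
    (hf2 : ∀ i, MemLp (f i) 2 μ)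
    (hac : ∀ i, μ.map (prepend i) ≪ μ)
    (hrn : ∀ i, (μ.map (prepend i)).rnDeriv μ =ᵐ[μ]
      fun x => ENNReal.ofReal (‖f i x‖ ^ 2))
    (hne : ∀ i, ∀ᵐ x ∂μ, x 0 = i → f i x ≠ 0) :
    μ.map shift ≪ μ ∧
      (μ.map shift).rnDeriv μ =ᵐ[μ]
        fun x => ∑ j, Set.indicator (cyl [j]) (fun _ => (1 : ℝ≥0∞)) (prepend j x) /
          ENNReal.ofReal (‖f j (prepend j x)‖ ^ 2) := by
  classical
  -- measurable representatives
  set F : Fin N → Word N → ℂ := fun j => ((hf2 j).1.mk (f j)) with hF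
  have hFm : ∀ j, Measurable (F j) := fun j => (hf2 j).1.stronglyMeasurable_mk.measurable
  have hFe : ∀ j, f j =ᵐ[μ] F j := fun j => (hf2 j).1.ae_eq_mk
  set D : Fin N → Word N → ℝ≥0∞ := fun j ω => ENNReal.ofReal (‖F j ω‖ ^ 2) with hD
  have hDm : ∀ j, Measurable (D j) := fun j =>
    ((hFm j).norm.pow_const 2).ennreal_ofReal
  -- the nonvanishing condition for F
  have hne' : ∀ j : Fin N, ∀ᵐ ω ∂μ, ω 0 = j → F j ω ≠ 0 := by
    intro j
    filter_upwards [hne j, hFe j] with ω h1 h2 h3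
    rw [← h2]; exact h1 h3
  have hDne : ∀ j : Fin N, ∀ᵐ ω ∂μ, ω 0 = j → (D j ω ≠ 0 ∧ D j ω ≠ ∞) := by
    intro j
    filter_upwards [hne' j] with ω h1 h2
    refine ⟨?_, ofReal_ne_top⟩
    simp only [hD, ne_eq, ENNReal.ofReal_eq_zero, not_le]
    exact pow_pos (norm_pos_iff.2 (h1 h2)) 2
  -- the map measure as a density
  have hν : ∀ j : Fin N, μ.map (prepend j) = μ.withDensity (D j) := by
    intro j
    haveI := μ.isFiniteMeasure_map (prepend j)
    haveI : (μ.map (prepend j)).HaveLebesgueDecomposition μ :=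
      Measure.haveLebesgueDecomposition_of_finiteMeasure
    rw [← Measure.withDensity_rnDeriv_eq _ _ (hac j)]
    apply withDensity_congr_ae
    refine (hrn j).trans ?_
    filter_upwards [hFe j] with ω h
    simp [hD, h]
  -- membership in B j
  have hmemB : ∀ (j : Fin N) (s : Set (Word N)) (x : Word N),
      prepend j x ∈ cyl [j] ∩ shift ⁻¹' s ↔ x ∈ s := by
    intro j s x
    simp [prepend_mem_cyl, shift_prepend, Set.mem_preimage]
  -- key computation for each j
  have key : ∀ (j : Fin N) (s : Set (Word N)), MeasurableSet s →
      μ (cyl [j] ∩ shift ⁻¹' s) = ∫⁻ x in s, (D j (prepend j x))⁻¹ ∂μ := by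
    intro j s hs
    set B : Set (Word N) := cyl [j] ∩ shift ⁻¹' s with hB
    have hBm : MeasurableSet B := (measurableSet_cyl_single j).inter (measurable_shift hs)
    have hh : Measurable (B.indicator fun ω => (D j ω)⁻¹) := ((hDm j).inv).indicator hBm
    calc μ B = ∫⁻ ω, B.indicator (fun _ => 1) ω ∂μ := by
          rw [lintegral_indicator hBm _]; simp
      _ = ∫⁻ ω, D j ω * B.indicator (fun ω => (D j ω)⁻¹) ω ∂μ := by
          apply lintegral_congr_ae
          filter_upwards [hDne j] with ω h1
          by_cases hωB : ω ∈ B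
          · have h0 : ω 0 = j := (mem_cyl_single j ω).1 hωB.1
            rw [Set.indicator_of_mem hωB, Set.indicator_of_mem hωB,
              ENNReal.mul_inv_cancel (h1 h0).1 (h1 h0).2]
          · rw [Set.indicator_of_notMem hωB, Set.indicator_of_notMem hωB, mul_zero]
      _ = ∫⁻ ω, B.indicator (fun ω => (D j ω)⁻¹) ω ∂(μ.withDensity (D j)) :=
          (lintegral_withDensity_eq_lintegral_mul μ (hDm j) hh).symm
      _ = ∫⁻ ω, B.indicator (fun ω => (D j ω)⁻¹) ω ∂(μ.map (prepend j)) := by rw [hν j]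
      _ = ∫⁻ x, B.indicator (fun ω => (D j ω)⁻¹) (prepend j x) ∂μ :=
          lintegral_map hh (measurable_prepend j)
      _ = ∫⁻ x in s, (D j (prepend j x))⁻¹ ∂μ := by
          rw [← lintegral_indicator hs _]
          congr 1; funext x
          by_cases hx : x ∈ s
          · rw [Set.indicator_of_mem hx, Set.indicator_of_mem ((hmemB j s x).2 hx)]
          · rw [Set.indicator_of_notMem hx,
              Set.indicator_of_notMem (fun h => hx ((hmemB j s x).1 h))]
  -- the density function
  set G : Word N → ℝ≥0∞ := fun x => ∑ j, (D j (prepend j x))⁻¹ with hG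
  have hGm : Measurable G :=
    Finset.measurable_sum _ fun j _ => ((hDm j).comp (measurable_prepend j)).inv
  -- main measure identity
  have main : μ.map shift = μ.withDensity G := by
    ext s hs
    rw [Measure.map_apply measurable_shift hs, withDensity_apply _ hs]
    have hcover : shift ⁻¹' s = ⋃ j : Fin N, cyl [j] ∩ shift ⁻¹' s := by
      ext ω
      simp only [Set.mem_iUnion, Set.mem_inter_iff, Set.mem_preimage, mem_cyl_single]
      constructor
      · intro h; exact ⟨ω 0, rfl, h⟩
      · rintro ⟨j, _, h⟩; exact h
    have hdisj : Pairwise (Function.onFun Disjoint fun j : Fin N => cyl [j] ∩ shift ⁻¹' s) := by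
      intro i j hij
      refine Set.disjoint_left.2 fun ω hi hj => hij ?_
      have h1 := (mem_cyl_single i ω).1 hi.1
      have h2 := (mem_cyl_single j ω).1 hj.1
      rw [← h1, ← h2]
    rw [hcover, measure_iUnion hdisj
      (fun j => (measurableSet_cyl_single j).inter (measurable_shift hs)), tsum_fintype]
    rw [hG]
    rw [lintegral_finset_sum]
    · exact Finset.sum_congr rfl fun j _ => key j s hs
    · exact fun j _ => ((hDm j).comp (measurable_prepend j)).inv
  constructor
  · rw [main]; exact withDensity_absolutelyContinuous μ G
  · have h1 : (μ.map shift).rnDeriv μ =ᵐ[μ] G := by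
      rw [main]; exact Measure.rnDeriv_withDensity μ hGm
    refine h1.trans ?_
    have h2 : ∀ᵐ x ∂μ, ∀ j : Fin N, f j (prepend j x) = F j (prepend j x) := by
      rw [ae_all_iff]
      intro j
      exact ae_of_ae_map (measurable_prepend j).aemeasurable ((hac j).ae_le (hFe j))
    filter_upwards [h2] with x hx
    rw [hG]
    refine Finset.sum_congr rfl fun j _ => ?_
    rw [Set.indicator_of_mem (prepend_mem_cyl j x), hx j, one_div]
end
end

section
/- Let (μ, (f_i)_{i∈Z_N}) be a monic system on K_N. Then the operators S_i on L²(μ) defined by (S_i f)(x) = f_i(x)·f(σ(x)) are isometries with mutually orthogonal ranges satisfying the Cuntz relations: S_i* S_j = δ_{ij} I and Σ_{i∈Z_N} S_i S_i* = I. -/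
open MeasureTheory ENNReal

noncomputable section

namespace CuntzAux

open scoped NNReal

variable {N : ℕ}

lemma measurable_shift : Measurable (shift (N := N)) :=
  measurable_pi_lambda _ fun n => measurable_pi_apply (n + 1)

lemma measurable_prepend (i : Fin N) : Measurable (prepend i) :=
  measurable_pi_lambda _ fun n => by
    cases n with
    | zero => exact measurable_const
    | succ m => exact measurable_pi_apply m

lemma shift_prepend (i : Fin N) (ω : Word N) : shift (prepend i ω) = ω := rfl

lemma prepend_shift {i : Fin N} {x : Word N} (h : x 0 = i) : prepend i (shift x) = x := by
  funext n
  cases n with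
  | zero => exact h.symm
  | succ m => rfl

lemma prepend_zero (i : Fin N) (ω : Word N) : prepend i ω 0 = i := rfl

variable {μ : Measure (Word N)} {F : Fin N → Word N → ℂ}

lemma dens_meas (hF : ∀ i, StronglyMeasurable (F i)) (i : Fin N) :
    Measurable fun x => (‖F i x‖₊ : ℝ≥0∞) ^ 2 :=
  ((hF i).measurable.nnnorm.coe_nnreal_ennreal).pow_const 2

lemma map_shift_eq (i : Fin N) : (μ.map (prepend i)).map shift = μ := by
  rw [Measure.map_map measurable_shift (measurable_prepend i)]
  have : shift ∘ prepend i = id := funext fun ω => shift_prepend i ω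
  rw [this, Measure.map_id]

lemma lint_shift (hF : ∀ i, StronglyMeasurable (F i))
    (hmap : ∀ i, μ.map (prepend i) = μ.withDensity fun x => (‖F i x‖₊ : ℝ≥0∞) ^ 2)
    (i : Fin N) {Φ : Word N → ℝ≥0∞} (hΦ : Measurable Φ) :
    ∫⁻ x, (‖F i x‖₊ : ℝ≥0∞) ^ 2 * Φ (shift x) ∂μ = ∫⁻ x, Φ x ∂μ := by
  have h1 : ∫⁻ x, Φ (shift x) ∂(μ.map (prepend i)) = ∫⁻ x, Φ x ∂μ := by
    rw [← lintegral_map hΦ measurable_shift, map_shift_eq i]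
  calc ∫⁻ x, (‖F i x‖₊ : ℝ≥0∞) ^ 2 * Φ (shift x) ∂μ
      = ∫⁻ x, Φ (shift x) ∂(μ.withDensity fun x => (‖F i x‖₊ : ℝ≥0∞) ^ 2) :=
        (lintegral_withDensity_eq_lintegral_mul μ (dens_meas hF i)
          (hΦ.comp measurable_shift)).symm
    _ = ∫⁻ x, Φ (shift x) ∂(μ.map (prepend i)) := by rw [hmap i]
    _ = ∫⁻ x, Φ x ∂μ := h1

lemma vanish (hF : ∀ i, StronglyMeasurable (F i))
    (hmap : ∀ i, μ.map (prepend i) = μ.withDensity fun x => (‖F i x‖₊ : ℝ≥0∞) ^ 2)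
    (i : Fin N) : ∀ᵐ x ∂μ, x 0 ≠ i → F i x = 0 := by
  have hS : MeasurableSet {x : Word N | x 0 ≠ i} := by
    have he : {x : Word N | x 0 ≠ i} = (fun x : Word N => x 0) ⁻¹' ({i}ᶜ) := rfl
    rw [he]
    exact measurable_pi_apply 0 (measurableSet_singleton i).compl
  have h0 : (μ.map (prepend i)) {x : Word N | x 0 ≠ i} = 0 := by
    rw [Measure.map_apply (measurable_prepend i) hS]
    have : prepend i ⁻¹' {x : Word N | x 0 ≠ i} = ∅ := by
      ext ω
      simp [Set.mem_preimage, prepend_zero]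
    rw [this, measure_empty]
  rw [hmap i, withDensity_apply _ hS] at h0
  have h2 := (setLIntegral_eq_zero_iff hS (dens_meas hF i)).mp h0
  filter_upwards [h2] with x hx h
  simpa [pow_eq_zero_iff] using hx h

lemma shift_congr (hF : ∀ i, StronglyMeasurable (F i))
    (hmap : ∀ i, μ.map (prepend i) = μ.withDensity fun x => (‖F i x‖₊ : ℝ≥0∞) ^ 2)
    (i : Fin N) {g₁ g₂ : Word N → ℂ} (h : g₁ =ᵐ[μ] g₂) :
    (fun x => F i x * g₁ (shift x)) =ᵐ[μ] fun x => F i x * g₂ (shift x) := by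
  obtain ⟨E, hsub, hE, hE0⟩ := exists_measurable_superset_of_null (ae_iff.mp h)
  have key : ∀ᵐ x ∂μ, shift x ∈ E → F i x = 0 := by
    have h0 : (μ.withDensity fun x => (‖F i x‖₊ : ℝ≥0∞) ^ 2) (shift ⁻¹' E) = 0 := by
      rw [← hmap i, Measure.map_apply (measurable_prepend i) (measurable_shift hE)]
      have : prepend i ⁻¹' (shift ⁻¹' E) = E := by
        ext ω
        simp [Set.mem_preimage, shift_prepend]
      rw [this]
      exact hE0
    rw [withDensity_apply _ (measurable_shift hE)] at h0
    have h2 := (setLIntegral_eq_zero_iff (measurable_shift hE) (dens_meas hF i)).mp h0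
    filter_upwards [h2] with x hx hxE
    simpa [pow_eq_zero_iff] using hx hxE
  filter_upwards [key] with x hx
  by_cases hxe : shift x ∈ E
  · simp only [hx hxe, zero_mul]
  · have : g₁ (shift x) = g₂ (shift x) := by
      by_contra hne
      exact hxe (hsub hne)
    rw [this]

lemma eLpNorm_two_eq {α : Type*} [MeasurableSpace α] {ν : Measure α} (k : α → ℂ) :
    eLpNorm k 2 ν = (∫⁻ x, (‖k x‖₊ : ℝ≥0∞) ^ 2 ∂ν) ^ (1/2 : ℝ) := by
  rw [eLpNorm_eq_lintegral_rpow_enorm_toReal two_ne_zero ENNReal.ofNat_ne_top]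
  congr 1
  refine lintegral_congr fun x => ?_
  rw [← ENNReal.rpow_natCast]
  norm_num
  rfl

lemma eLpNorm_shift (hF : ∀ i, StronglyMeasurable (F i))
    (hmap : ∀ i, μ.map (prepend i) = μ.withDensity fun x => (‖F i x‖₊ : ℝ≥0∞) ^ 2)
    (i : Fin N) {g : Word N → ℂ} (hg : StronglyMeasurable g) :
    eLpNorm (fun x => F i x * g (shift x)) 2 μ = eLpNorm g 2 μ := by
  rw [eLpNorm_two_eq, eLpNorm_two_eq]
  congr 1
  calc ∫⁻ x, (‖F i x * g (shift x)‖₊ : ℝ≥0∞) ^ 2 ∂μ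
      = ∫⁻ x, (‖F i x‖₊ : ℝ≥0∞) ^ 2 * (fun y => (‖g y‖₊ : ℝ≥0∞) ^ 2) (shift x) ∂μ := by
        refine lintegral_congr fun x => ?_
        push_cast [nnnorm_mul]
        ring
    _ = ∫⁻ x, (‖g x‖₊ : ℝ≥0∞) ^ 2 ∂μ :=
        lint_shift hF hmap i (hg.measurable.nnnorm.coe_nnreal_ennreal.pow_const 2)

lemma memS (hF : ∀ i, StronglyMeasurable (F i))
    (hmap : ∀ i, μ.map (prepend i) = μ.withDensity fun x => (‖F i x‖₊ : ℝ≥0∞) ^ 2)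
    (i : Fin N) {g : Word N → ℂ} (hg : StronglyMeasurable g)
    (hg2 : MemLp g 2 μ) : MemLp (fun x => F i x * g (shift x)) 2 μ :=
  ⟨((hF i).mul (hg.comp_measurable measurable_shift)).aestronglyMeasurable,
    by rw [eLpNorm_shift hF hmap i hg]; exact hg2.2⟩

lemma memℒp_of_sq_le {k g : Word N → ℂ} (hsm : AEStronglyMeasurable k μ)
    (hg2 : MemLp g 2 μ)
    (h : ∫⁻ x, (‖k x‖₊ : ℝ≥0∞) ^ 2 ∂μ ≤ ∫⁻ x, (‖g x‖₊ : ℝ≥0∞) ^ 2 ∂μ) :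
    MemLp k 2 μ := by
  refine ⟨hsm, ?_⟩
  calc eLpNorm k 2 μ = (∫⁻ x, (‖k x‖₊ : ℝ≥0∞) ^ 2 ∂μ) ^ (1/2 : ℝ) := eLpNorm_two_eq k
    _ ≤ (∫⁻ x, (‖g x‖₊ : ℝ≥0∞) ^ 2 ∂μ) ^ (1/2 : ℝ) := ENNReal.rpow_le_rpow h (by norm_num)
    _ = eLpNorm g 2 μ := (eLpNorm_two_eq g).symm
    _ < ⊤ := hg2.2

/-- The isometry `S i` as a linear map. -/
def Slin (hF : ∀ i, StronglyMeasurable (F i))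
    (hmap : ∀ i, μ.map (prepend i) = μ.withDensity fun x => (‖F i x‖₊ : ℝ≥0∞) ^ 2)
    (i : Fin N) : Lp ℂ 2 μ →ₗ[ℂ] Lp ℂ 2 μ where
  toFun g := (memS hF hmap i (Lp.stronglyMeasurable g) (Lp.memLp g)).toLp _
  map_add' g h := by
    rw [← MemLp.toLp_add]
    refine (MemLp.toLp_eq_toLp_iff _ _).mpr ?_
    filter_upwards [shift_congr hF hmap i (Lp.coeFn_add g h)] with x hx
    simp only [Pi.add_apply] at hx ⊢
    rw [hx]
    ring
  map_smul' c g := by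
    simp only [RingHom.id_apply]
    rw [← MemLp.toLp_const_smul]
    refine (MemLp.toLp_eq_toLp_iff _ _).mpr ?_
    filter_upwards [shift_congr hF hmap i (Lp.coeFn_smul c g)] with x hx
    simp only [Pi.smul_apply, smul_eq_mul] at hx ⊢
    rw [hx]
    ring

lemma Slin_norm (hF : ∀ i, StronglyMeasurable (F i))
    (hmap : ∀ i, μ.map (prepend i) = μ.withDensity fun x => (‖F i x‖₊ : ℝ≥0∞) ^ 2)
    (i : Fin N) (g : Lp ℂ 2 μ) : ‖Slin hF hmap i g‖ = ‖g‖ := by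
  rw [show Slin hF hmap i g
      = (memS hF hmap i (Lp.stronglyMeasurable g) (Lp.memLp g)).toLp _ from rfl,
    Lp.norm_toLp, eLpNorm_shift hF hmap i (Lp.stronglyMeasurable g), ← Lp.norm_def]

/-- The isometry `S i` as a continuous linear map. -/
def Sop (hF : ∀ i, StronglyMeasurable (F i))
    (hmap : ∀ i, μ.map (prepend i) = μ.withDensity fun x => (‖F i x‖₊ : ℝ≥0∞) ^ 2)
    (i : Fin N) : Lp ℂ 2 μ →L[ℂ] Lp ℂ 2 μ :=
  LinearMap.mkContinuous (Slin hF hmap i) 1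
    (fun g => by rw [one_mul, Slin_norm hF hmap i g])

lemma Sop_apply (hF : ∀ i, StronglyMeasurable (F i))
    (hmap : ∀ i, μ.map (prepend i) = μ.withDensity fun x => (‖F i x‖₊ : ℝ≥0∞) ^ 2)
    (i : Fin N) (g : Lp ℂ 2 μ) :
    ⇑(Sop hF hmap i g) =ᵐ[μ] fun x => F i x * (g : Word N → ℂ) (shift x) :=
  MemLp.coeFn_toLp (memS hF hmap i (Lp.stronglyMeasurable g) (Lp.memLp g))

lemma Sop_norm (hF : ∀ i, StronglyMeasurable (F i))
    (hmap : ∀ i, μ.map (prepend i) = μ.withDensity fun x => (‖F i x‖₊ : ℝ≥0∞) ^ 2)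
    (i : Fin N) (g : Lp ℂ 2 μ) : ‖Sop hF hmap i g‖ = ‖g‖ :=
  Slin_norm hF hmap i g

lemma nn_dens_meas (hF : ∀ i, StronglyMeasurable (F i)) (i : Fin N) :
    Measurable fun x => (‖F i x‖₊ ^ 2 : ℝ≥0) :=
  ((hF i).measurable.nnnorm).pow_const 2

lemma wd_eq (hmap : ∀ i, μ.map (prepend i) = μ.withDensity fun x => (‖F i x‖₊ : ℝ≥0∞) ^ 2)
    (i : Fin N) :
    (μ.withDensity fun x => ((‖F i x‖₊ ^ 2 : ℝ≥0) : ℝ≥0∞)) = μ.map (prepend i) := by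
  rw [hmap i]
  congr 1

lemma int_shift (hF : ∀ i, StronglyMeasurable (F i))
    (hmap : ∀ i, μ.map (prepend i) = μ.withDensity fun x => (‖F i x‖₊ : ℝ≥0∞) ^ 2)
    (i : Fin N) {Φ : Word N → ℂ} (hΦ : StronglyMeasurable Φ) :
    ∫ x, (‖F i x‖₊ ^ 2 : ℝ≥0) • Φ (shift x) ∂μ = ∫ x, Φ x ∂μ := by
  have hcomp : AEStronglyMeasurable (fun x => Φ (shift x)) (μ.map (prepend i)) :=
    (hΦ.comp_measurable measurable_shift).aestronglyMeasurable
  rw [← integral_withDensity_eq_integral_smul (nn_dens_meas hF i) (fun x => Φ (shift x)),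
    wd_eq hmap i, integral_map (measurable_prepend i).aemeasurable hcomp]
  simp only [shift_prepend]

lemma int_prepend (hF : ∀ i, StronglyMeasurable (F i))
    (hmap : ∀ i, μ.map (prepend i) = μ.withDensity fun x => (‖F i x‖₊ : ℝ≥0∞) ^ 2)
    (i : Fin N) {Ψ : Word N → ℂ} (hΨ : StronglyMeasurable Ψ) :
    ∫ x, Ψ (prepend i x) ∂μ = ∫ x, (‖F i x‖₊ ^ 2 : ℝ≥0) • Ψ x ∂μ := by
  rw [← integral_map (measurable_prepend i).aemeasurable hΨ.aestronglyMeasurable,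
    ← wd_eq hmap i, integral_withDensity_eq_integral_smul (nn_dens_meas hF i) Ψ]

lemma conj_mul_self (a : ℂ) : (starRingEnd ℂ) a * a = ((‖a‖ : ℝ) : ℂ) ^ 2 := by
  rw [mul_comm, Complex.mul_conj, Complex.normSq_eq_norm_sq]
  push_cast
  ring

lemma smul_helper (a b c : ℂ) :
    (starRingEnd ℂ) (a * b) * (a * c) = (‖a‖₊ ^ 2 : ℝ≥0) • ((starRingEnd ℂ) b * c) := by
  rw [NNReal.smul_def, Complex.real_smul, map_mul]
  push_cast
  rw [← conj_mul_self]
  ring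

lemma conj_helper (a b c : ℂ) :
    (starRingEnd ℂ) (a * b) * c = (‖a‖₊ ^ 2 : ℝ≥0) • ((starRingEnd ℂ) b * (a⁻¹ * c)) := by
  rw [NNReal.smul_def, Complex.real_smul, map_mul]
  push_cast
  rcases eq_or_ne a 0 with rfl | ha
  · simp
  · rw [← conj_mul_self]
    field_simp

lemma inner_Sop (hF : ∀ i, StronglyMeasurable (F i))
    (hmap : ∀ i, μ.map (prepend i) = μ.withDensity fun x => (‖F i x‖₊ : ℝ≥0∞) ^ 2)
    (i j : Fin N) (g h : Lp ℂ 2 μ) :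
    (inner ℂ (Sop hF hmap i g) (Sop hF hmap j h) : ℂ)
      = if i = j then (inner ℂ g h : ℂ) else 0 := by
  rw [L2.inner_def]
  by_cases hij : i = j
  · subst hij
    rw [if_pos rfl, L2.inner_def]
    have hΦ : StronglyMeasurable fun y =>
        (starRingEnd ℂ) ((g : Word N → ℂ) y) * (h : Word N → ℂ) y :=
      ((RCLike.continuous_conj.comp_stronglyMeasurable
        (Lp.stronglyMeasurable g)).mul (Lp.stronglyMeasurable h))
    calc ∫ x, (inner ℂ ((Sop hF hmap i g : Lp ℂ 2 μ) x) ((Sop hF hmap i h : Lp ℂ 2 μ) x) : ℂ) ∂μ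
        = ∫ x, (‖F i x‖₊ ^ 2 : ℝ≥0) •
            ((fun y => (starRingEnd ℂ) ((g : Word N → ℂ) y) * (h : Word N → ℂ) y)
              (shift x)) ∂μ := by
          refine integral_congr_ae ?_
          filter_upwards [Sop_apply hF hmap i g, Sop_apply hF hmap i h] with x h1 h2
          rw [RCLike.inner_apply', h1, h2]
          exact smul_helper _ _ _
      _ = ∫ x, (starRingEnd ℂ) ((g : Word N → ℂ) x) * (h : Word N → ℂ) x ∂μ :=
          int_shift hF hmap i hΦ
      _ = ∫ x, (inner ℂ ((g : Word N → ℂ) x) ((h : Word N → ℂ) x) : ℂ) ∂μ := by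
          refine integral_congr_ae (Filter.Eventually.of_forall fun x => ?_)
          simp only [RCLike.inner_apply']
  · rw [if_neg hij]
    have hz : (fun x => (inner ℂ ((Sop hF hmap i g : Lp ℂ 2 μ) x)
        ((Sop hF hmap j h : Lp ℂ 2 μ) x) : ℂ)) =ᵐ[μ] 0 := by
      filter_upwards [Sop_apply hF hmap i g, Sop_apply hF hmap j h,
        vanish hF hmap i, vanish hF hmap j] with x h1 h2 h3 h4
      rw [RCLike.inner_apply', h1, h2, Pi.zero_apply]
      by_cases hx : x 0 = i
      · rw [h4 (by rw [hx]; exact hij), zero_mul, mul_zero]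
      · rw [h3 hx, zero_mul, map_zero, zero_mul]
    rw [integral_congr_ae hz]
    simp

lemma memK (hF : ∀ i, StronglyMeasurable (F i))
    (hmap : ∀ i, μ.map (prepend i) = μ.withDensity fun x => (‖F i x‖₊ : ℝ≥0∞) ^ 2)
    (i : Fin N) {g : Word N → ℂ} (hg : StronglyMeasurable g) (hg2 : MemLp g 2 μ) :
    MemLp (fun x => (F i (prepend i x))⁻¹ * g (prepend i x)) 2 μ := by
  have hKsm : StronglyMeasurable fun y => (F i y)⁻¹ * g y :=
    ((hF i).measurable.inv.stronglyMeasurable).mul hg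
  refine memℒp_of_sq_le
    ((hKsm.comp_measurable (measurable_prepend i)).aestronglyMeasurable) hg2 ?_
  have hΘ : Measurable fun y => (‖(F i y)⁻¹ * g y‖₊ : ℝ≥0∞) ^ 2 :=
    hKsm.measurable.nnnorm.coe_nnreal_ennreal.pow_const 2
  calc ∫⁻ x, (‖(F i (prepend i x))⁻¹ * g (prepend i x)‖₊ : ℝ≥0∞) ^ 2 ∂μ
      = ∫⁻ y, (‖(F i y)⁻¹ * g y‖₊ : ℝ≥0∞) ^ 2 ∂(μ.map (prepend i)) :=
        (lintegral_map hΘ (measurable_prepend i)).symm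
    _ = ∫⁻ y, (‖F i y‖₊ : ℝ≥0∞) ^ 2 * (‖(F i y)⁻¹ * g y‖₊ : ℝ≥0∞) ^ 2 ∂μ := by
        rw [hmap i]
        exact lintegral_withDensity_eq_lintegral_mul μ (dens_meas hF i) hΘ
    _ ≤ ∫⁻ y, (‖g y‖₊ : ℝ≥0∞) ^ 2 ∂μ := by
        refine lintegral_mono fun y => ?_
        have hle : (‖F i y‖₊ * ‖F i y‖₊⁻¹ : ℝ≥0) ≤ 1 := by
          rcases eq_or_ne (‖F i y‖₊) 0 with h0 | h0
          · simp [h0]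
          · rw [mul_inv_cancel₀ h0]
        calc (‖F i y‖₊ : ℝ≥0∞) ^ 2 * (‖(F i y)⁻¹ * g y‖₊ : ℝ≥0∞) ^ 2
            = (((‖F i y‖₊ * ‖F i y‖₊⁻¹) ^ 2 * ‖g y‖₊ ^ 2 : ℝ≥0) : ℝ≥0∞) := by
              push_cast [nnnorm_mul, nnnorm_inv]
              ring
          _ ≤ ((1 * ‖g y‖₊ ^ 2 : ℝ≥0) : ℝ≥0∞) := by
              refine ENNReal.coe_le_coe.mpr (mul_le_mul_left ?_ _)
              calc (‖F i y‖₊ * ‖F i y‖₊⁻¹) ^ 2 ≤ 1 ^ 2 :=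
                    pow_le_pow_left₀ zero_le hle 2
                _ = 1 := one_pow 2
          _ = (‖g y‖₊ : ℝ≥0∞) ^ 2 := by
              push_cast
              ring

lemma adjoint_Sop (hF : ∀ i, StronglyMeasurable (F i))
    (hmap : ∀ i, μ.map (prepend i) = μ.withDensity fun x => (‖F i x‖₊ : ℝ≥0∞) ^ 2)
    (i : Fin N) (g : Lp ℂ 2 μ) :
    ContinuousLinearMap.adjoint (Sop hF hmap i) g
      = (memK hF hmap i (Lp.stronglyMeasurable g) (Lp.memLp g)).toLp _ := by
  refine ext_inner_left ℂ fun h => ?_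
  rw [ContinuousLinearMap.adjoint_inner_right, L2.inner_def, L2.inner_def]
  have hΨ : StronglyMeasurable fun y =>
      (starRingEnd ℂ) ((h : Word N → ℂ) (shift y)) *
        ((F i y)⁻¹ * (g : Word N → ℂ) y) :=
    (RCLike.continuous_conj.comp_stronglyMeasurable
      ((Lp.stronglyMeasurable h).comp_measurable measurable_shift)).mul
      (((hF i).measurable.inv.stronglyMeasurable).mul (Lp.stronglyMeasurable g))
  have hk := MemLp.coeFn_toLp (memK hF hmap i (Lp.stronglyMeasurable g) (Lp.memLp g))
  calc ∫ x, (inner ℂ ((Sop hF hmap i h : Lp ℂ 2 μ) x) ((g : Word N → ℂ) x) : ℂ) ∂μ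
      = ∫ x, (‖F i x‖₊ ^ 2 : ℝ≥0) •
          ((starRingEnd ℂ) ((h : Word N → ℂ) (shift x)) *
            ((F i x)⁻¹ * (g : Word N → ℂ) x)) ∂μ := by
        refine integral_congr_ae ?_
        filter_upwards [Sop_apply hF hmap i h] with x hx
        rw [RCLike.inner_apply', hx]
        exact conj_helper _ _ _
    _ = ∫ x, (starRingEnd ℂ) ((h : Word N → ℂ) (shift (prepend i x))) *
          ((F i (prepend i x))⁻¹ * (g : Word N → ℂ) (prepend i x)) ∂μ :=
        (int_prepend hF hmap i hΨ).symm
    _ = ∫ x, (inner ℂ ((h : Word N → ℂ) x)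
          ((((memK hF hmap i (Lp.stronglyMeasurable g) (Lp.memLp g)).toLp _ :
            Lp ℂ 2 μ) : Word N → ℂ) x) : ℂ) ∂μ := by
        refine integral_congr_ae ?_
        filter_upwards [hk] with x hx
        rw [RCLike.inner_apply', hx]
        simp only [shift_prepend]

lemma SK (hF : ∀ i, StronglyMeasurable (F i))
    (hmap : ∀ i, μ.map (prepend i) = μ.withDensity fun x => (‖F i x‖₊ : ℝ≥0∞) ^ 2)
    (hne : ∀ i, ∀ᵐ x ∂μ, x 0 = i → F i x ≠ 0) (i : Fin N) (g : Lp ℂ 2 μ) :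
    ⇑(Sop hF hmap i (ContinuousLinearMap.adjoint (Sop hF hmap i) g)) =ᵐ[μ]
      fun x => if x 0 = i then (g : Word N → ℂ) x else 0 := by
  rw [adjoint_Sop hF hmap i g]
  have h1 := Sop_apply hF hmap i
    ((memK hF hmap i (Lp.stronglyMeasurable g) (Lp.memLp g)).toLp _)
  have h2 := shift_congr hF hmap i
    (MemLp.coeFn_toLp (memK hF hmap i (Lp.stronglyMeasurable g) (Lp.memLp g)))
  filter_upwards [h1, h2, hne i, vanish hF hmap i] with x hx1 hx2 hxne hxv
  rw [hx1, hx2]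
  by_cases hx0 : x 0 = i
  · rw [if_pos hx0, prepend_shift hx0, ← mul_assoc, mul_inv_cancel₀ (hxne hx0), one_mul]
  · rw [if_neg hx0, hxv hx0, zero_mul]

lemma coeFn_sum {ι : Type*} (s : Finset ι) (v : ι → Lp ℂ 2 μ) :
    ⇑(∑ i ∈ s, v i) =ᵐ[μ] fun x => ∑ i ∈ s, (v i : Word N → ℂ) x := by
  classical
  induction s using Finset.induction with
  | empty => simp only [Finset.sum_empty]; exact Lp.coeFn_zero ℂ 2 μ
  | insert a t hnot ih =>
    rw [Finset.sum_insert hnot]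
    filter_upwards [Lp.coeFn_add (v a) (∑ i ∈ t, v i), ih] with x hx1 hx2
    rw [hx1]
    simp only [Pi.add_apply, Finset.sum_insert hnot, hx2]

lemma adj_relation (hF : ∀ i, StronglyMeasurable (F i))
    (hmap : ∀ i, μ.map (prepend i) = μ.withDensity fun x => (‖F i x‖₊ : ℝ≥0∞) ^ 2) :
    ∀ i j, (ContinuousLinearMap.adjoint (Sop hF hmap i)).comp (Sop hF hmap j)
      = if i = j then 1 else 0 := by
  intro i j
  refine ContinuousLinearMap.ext fun h => ?_
  refine ext_inner_left ℂ fun g => ?_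
  rw [ContinuousLinearMap.comp_apply, ContinuousLinearMap.adjoint_inner_right,
    inner_Sop hF hmap i j g h]
  by_cases hij : i = j
  · simp [hij]
  · simp [hij]

lemma sum_relation (hF : ∀ i, StronglyMeasurable (F i))
    (hmap : ∀ i, μ.map (prepend i) = μ.withDensity fun x => (‖F i x‖₊ : ℝ≥0∞) ^ 2)
    (hne : ∀ i, ∀ᵐ x ∂μ, x 0 = i → F i x ≠ 0) :
    ∑ i, (Sop hF hmap i).comp (ContinuousLinearMap.adjoint (Sop hF hmap i)) = 1 := by
  refine ContinuousLinearMap.ext fun g => ?_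
  rw [ContinuousLinearMap.sum_apply, ContinuousLinearMap.one_apply]
  refine Lp.ext ?_
  have hall : ∀ᵐ x ∂μ, ∀ i : Fin N,
      (Sop hF hmap i (ContinuousLinearMap.adjoint (Sop hF hmap i) g) : Word N → ℂ) x
        = if x 0 = i then (g : Word N → ℂ) x else 0 :=
    ae_all_iff.mpr fun i => SK hF hmap hne i g
  filter_upwards [coeFn_sum Finset.univ
    (fun i => (Sop hF hmap i).comp (ContinuousLinearMap.adjoint (Sop hF hmap i)) g),
    hall] with x hx1 hx2
  rw [hx1]
  calc ∑ i : Fin N,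
      ((Sop hF hmap i).comp (ContinuousLinearMap.adjoint (Sop hF hmap i)) g
        : Word N → ℂ) x
      = ∑ i : Fin N, if x 0 = i then (g : Word N → ℂ) x else 0 :=
        Finset.sum_congr rfl fun i _ => hx2 i
    _ = (g : Word N → ℂ) x := by simp

end CuntzAux

theorem monicSystem_cuntz_relations {N : ℕ} (hN : 2 ≤ N)
    (μ : Measure (Word N)) [IsFiniteMeasure μ] (f : Fin N → Word N → ℂ)
    (hf2 : ∀ i, MemLp (f i) 2 μ)
    (hac : ∀ i, μ.map (prepend i) ≪ μ)
    (hrn : ∀ i, (μ.map (prepend i)).rnDeriv μ =ᵐ[μ]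
      fun x => ENNReal.ofReal (‖f i x‖ ^ 2))
    (hne : ∀ i, ∀ᵐ x ∂μ, x 0 = i → f i x ≠ 0) :
    ∃ S : Fin N → (Lp ℂ 2 μ →L[ℂ] Lp ℂ 2 μ),
      (∀ i (g : Lp ℂ 2 μ), ⇑(S i g) =ᵐ[μ] fun x => f i x * g (shift x)) ∧
      (∀ i (g : Lp ℂ 2 μ), ‖S i g‖ = ‖g‖) ∧
      (∀ i j, (ContinuousLinearMap.adjoint (S i)).comp (S j)
          = if i = j then 1 else 0) ∧
      (∑ i, (S i).comp (ContinuousLinearMap.adjoint (S i)) = 1) := by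
  classical
  set F : Fin N → Word N → ℂ := fun i => ((hf2 i).aestronglyMeasurable).mk (f i) with hFdef
  have hFsm : ∀ i, StronglyMeasurable (F i) :=
    fun i => ((hf2 i).aestronglyMeasurable).stronglyMeasurable_mk
  have hFe : ∀ i, f i =ᵐ[μ] F i := fun i => ((hf2 i).aestronglyMeasurable).ae_eq_mk
  have hmap : ∀ i, μ.map (prepend i) = μ.withDensity fun x => (‖F i x‖₊ : ℝ≥0∞) ^ 2 := by
    intro i
    have hfin : IsFiniteMeasure (μ.map (prepend i)) := Measure.isFiniteMeasure_map μ _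
    have : SFinite (μ.map (prepend i)) := inferInstance
    calc μ.map (prepend i) = μ.withDensity ((μ.map (prepend i)).rnDeriv μ) :=
          (MeasureTheory.Measure.withDensity_rnDeriv_eq (μ.map (prepend i)) μ (hac i)).symm
      _ = _ := withDensity_congr_ae ?_
    filter_upwards [hrn i, hFe i] with x h1 h2
    rw [h1, ← h2, sq, ENNReal.ofReal_mul (norm_nonneg _), ofReal_norm, enorm_eq_nnnorm, ← sq]
  have hneF : ∀ i, ∀ᵐ x ∂μ, x 0 = i → F i x ≠ 0 := by
    intro i
    filter_upwards [hne i, hFe i] with x h1 h2 h3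
    rw [← h2]
    exact h1 h3
  refine ⟨CuntzAux.Sop hFsm hmap, ?_, ?_, ?_, ?_⟩
  · intro i g
    filter_upwards [CuntzAux.Sop_apply hFsm hmap i g, hFe i] with x h1 h2
    rw [h1, h2]
  · exact fun i g => CuntzAux.Sop_norm hFsm hmap i g
  · exact CuntzAux.adj_relation hFsm hmap
  · exact CuntzAux.sum_relation hFsm hmap hneF
end
end

section
/- Let (μ, (f_i)) and (μ', (f_i')) be two monic systems on K_N. The associated Cuntz-algebra representations on L²(μ) and L²(μ') are unitarily equivalent if and only if μ and μ' are mutually absolutely continuous and there is a function h with dμ'/dμ = |h|² and f_i' = (h∘σ/h)·f_i for all i ∈ Z_N. -/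
open MeasureTheory ENNReal

noncomputable section

namespace MonicAux

variable {N : ℕ}

lemma measurable_shift : Measurable (shift (N := N)) :=
  measurable_pi_lambda _ fun n => measurable_pi_apply _

lemma measurable_prepend (i : Fin N) : Measurable (prepend i) :=
  measurable_pi_lambda _ fun n => by
    cases n with
    | zero => exact measurable_const
    | succ m => exact measurable_pi_apply m

@[simp] lemma shift_prepend (i : Fin N) (ω : Word N) : shift (prepend i ω) = ω := rfl

@[simp] lemma prepend_zero (i : Fin N) (ω : Word N) : prepend i ω 0 = i := rfl

lemma prepend_shift {i : Fin N} {ω : Word N} (h : ω 0 = i) : prepend i (shift ω) = ω := by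
  funext n
  cases n with
  | zero => exact h.symm
  | succ m => rfl

lemma prepend_injective (i : Fin N) : Function.Injective (prepend (N := N) i) := by
  intro a b hab
  have := congrArg shift hab
  simpa using this

lemma prepend_image (i : Fin N) (S : Set (Word N)) :
    prepend i '' S = {x | x 0 = i ∧ shift x ∈ S} := by
  ext x
  constructor
  · rintro ⟨y, hy, rfl⟩; exact ⟨rfl, hy⟩
  · rintro ⟨h0, hs⟩; exact ⟨shift x, hs, prepend_shift h0⟩

lemma measurableSet_eval_eq (k : ℕ) (j : Fin N) : MeasurableSet {x : Word N | x k = j} := by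
  have h : {x : Word N | x k = j} = (fun x : Word N => x k) ⁻¹' {j} := rfl
  rw [h]
  exact measurable_pi_apply k (measurableSet_singleton j)

lemma measurableSet_prepend_image (i : Fin N) {S : Set (Word N)} (hS : MeasurableSet S) :
    MeasurableSet (prepend i '' S) := by
  rw [prepend_image]
  exact (measurableSet_eval_eq 0 i).inter (measurable_shift hS)

lemma measurableSet_cyl (w : List (Fin N)) : MeasurableSet (cyl w) := by
  have : cyl w = ⋂ k : Fin w.length, {x : Word N | x k = w.get k} := by
    ext x; simp [cyl, Set.mem_iInter]
  rw [this]
  exact MeasurableSet.iInter fun k => measurableSet_eval_eq (k : ℕ) (w.get k)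

lemma cyl_nil : cyl ([] : List (Fin N)) = Set.univ := by
  ext x; simp [cyl]

lemma mem_cyl_cons {i : Fin N} {w : List (Fin N)} {x : Word N} :
    x ∈ cyl (i :: w) ↔ x 0 = i ∧ shift x ∈ cyl w := by
  constructor
  · intro h
    refine ⟨h ⟨0, Nat.succ_pos _⟩, fun k => ?_⟩
    have := h k.succ
    simpa [shift] using this
  · rintro ⟨h0, hs⟩ k
    refine Fin.cases ?_ (fun m => ?_) k
    · exact h0
    · have := hs m
      simpa [shift] using this

lemma mem_cyl_ofFn {n : ℕ} (v : Fin n → Fin N) (x : Word N) :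
    x ∈ cyl (List.ofFn v) ↔ ∀ k : Fin n, x k = v k := by
  constructor
  · intro h k
    have := h (Fin.cast (List.length_ofFn (f := v)).symm k)
    simpa [List.get_ofFn] using this
  · intro h k
    have := h (Fin.cast (List.length_ofFn (f := v)) k)
    simpa [List.get_ofFn, Fin.cast] using this

lemma isPiSystem_cyl : IsPiSystem {s : Set (Word N) | ∃ w, s = cyl w} := by
  rintro s ⟨w, rfl⟩ t ⟨v, rfl⟩ hne
  obtain ⟨x, hxw, hxv⟩ := hne
  rcases le_total w.length v.length with hle | hle
  · have hsub : cyl v ⊆ cyl w := by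
      intro y hy k
      have h1 : x (k : ℕ) = w.get k := hxw k
      have h2 : x (k : ℕ) = v.get ⟨k, lt_of_lt_of_le k.2 hle⟩ := hxv ⟨k, lt_of_lt_of_le k.2 hle⟩
      have h3 : y (k : ℕ) = v.get ⟨k, lt_of_lt_of_le k.2 hle⟩ := hy ⟨k, lt_of_lt_of_le k.2 hle⟩
      rw [h3, ← h2, h1]
    have : cyl w ∩ cyl v = cyl v := Set.inter_eq_self_of_subset_right hsub
    rw [this]; exact ⟨v, rfl⟩
  · have hsub : cyl w ⊆ cyl v := by
      intro y hy k
      have h1 : x (k : ℕ) = v.get k := hxv k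
      have h2 : x (k : ℕ) = w.get ⟨k, lt_of_lt_of_le k.2 hle⟩ := hxw ⟨k, lt_of_lt_of_le k.2 hle⟩
      have h3 : y (k : ℕ) = w.get ⟨k, lt_of_lt_of_le k.2 hle⟩ := hy ⟨k, lt_of_lt_of_le k.2 hle⟩
      rw [h3, ← h2, h1]
    have : cyl w ∩ cyl v = cyl w := Set.inter_eq_self_of_subset_left hsub
    rw [this]; exact ⟨w, rfl⟩

lemma generateFrom_cyl :
    (inferInstance : MeasurableSpace (Word N)) =
      MeasurableSpace.generateFrom {s : Set (Word N) | ∃ w, s = cyl w} := by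
  apply le_antisymm
  · rw [show (inferInstance : MeasurableSpace (Word N)) = MeasurableSpace.pi from rfl]
    refine iSup_le fun k => ?_
    intro t ht
    rw [MeasurableSpace.measurableSet_comap] at ht
    obtain ⟨s, -, rfl⟩ := ht
    -- show every set of the form (eval k) ⁻¹' s is measurable; reduce to singletons
    have hsingle : ∀ j : Fin N,
        MeasurableSet[MeasurableSpace.generateFrom {s : Set (Word N) | ∃ w, s = cyl w}]
          {x : Word N | x k = j} := by
      intro j
      have heq : {x : Word N | x k = j} =
          ⋃ v : {v : Fin (k + 1) → Fin N // v (Fin.last k) = j}, cyl (List.ofFn v.1) := by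
        ext x
        simp only [Set.mem_setOf_eq, Set.mem_iUnion]
        constructor
        · intro hx
          refine ⟨⟨fun m => x m, ?_⟩, ?_⟩
          · simpa [Fin.val_last] using hx
          · rw [mem_cyl_ofFn]; intro m; rfl
        · rintro ⟨⟨v, hv⟩, hx⟩
          rw [mem_cyl_ofFn] at hx
          have h2 := hx (Fin.last k)
          simp only [Fin.val_last] at h2
          rw [h2]
          exact hv
      rw [heq]
      exact MeasurableSet.iUnion fun v =>
        MeasurableSpace.measurableSet_generateFrom ⟨_, rfl⟩
    have hpre : (fun x : Word N => x k) ⁻¹' s = ⋃ j ∈ s, {x : Word N | x k = j} := by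
      ext x; simp
    rw [hpre]
    exact MeasurableSet.biUnion s.to_countable (fun j _ => hsingle j)
  · refine MeasurableSpace.generateFrom_le ?_
    rintro s ⟨w, rfl⟩
    exact measurableSet_cyl w


/-- norm-squared density associated to a function. -/
def dens (φ : Word N → ℂ) : Word N → ℝ≥0∞ := fun x => (‖φ x‖₊ : ℝ≥0∞) ^ 2

lemma measurable_dens {φ : Word N → ℂ} (hφ : Measurable φ) : Measurable (dens φ) := by
  apply Measurable.pow_const
  exact (hφ.nnnorm).coe_nnreal_ennreal

lemma eLpNorm_two_eq {α : Type*} [MeasurableSpace α] (ν : Measure α) (u : α → ℂ) :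
    eLpNorm u 2 ν = (∫⁻ x, (‖u x‖₊ : ℝ≥0∞) ^ 2 ∂ν) ^ (1 / (2:ℝ)) := by
  rw [eLpNorm_eq_lintegral_rpow_enorm_toReal (two_ne_zero) (ENNReal.ofNat_ne_top)]
  have h2 : (2 : ℝ≥0∞).toReal = (2 : ℝ) := by norm_num
  rw [h2]
  congr 1
  apply lintegral_congr
  intro x
  rw [enorm_eq_nnnorm, ← ENNReal.rpow_natCast]
  norm_num

lemma lintegral_sq_lt_top {α : Type*} [MeasurableSpace α] {ν : Measure α} {u : α → ℂ}
    (hu : MemLp u 2 ν) : ∫⁻ x, (‖u x‖₊ : ℝ≥0∞) ^ 2 ∂ν < ⊤ := by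
  have h2 := hu.2
  rw [eLpNorm_two_eq] at h2
  by_contra hcon
  push_neg at hcon
  have : ∫⁻ x, (‖u x‖₊ : ℝ≥0∞) ^ 2 ∂ν = ⊤ := top_le_iff.mp hcon
  rw [this] at h2
  have : (⊤ : ℝ≥0∞) ^ (1 / (2:ℝ)) = ⊤ := by
    rw [ENNReal.top_rpow_of_pos]; norm_num
  rw [this] at h2
  exact (lt_irrefl _ h2).elim

lemma memℒp_two_of {α : Type*} [MeasurableSpace α] {ν : Measure α} {u : α → ℂ}
    (hu : Measurable u) (hfin : ∫⁻ x, (‖u x‖₊ : ℝ≥0∞) ^ 2 ∂ν < ⊤) : MemLp u 2 ν := by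
  refine ⟨hu.aestronglyMeasurable, ?_⟩
  rw [eLpNorm_two_eq]
  exact ENNReal.rpow_lt_top_of_nonneg (by norm_num) hfin.ne

section system
variable {ν : Measure (Word N)} {i : Fin N} {φ : Word N → ℂ}

/-- a.e. vanishing of `φ` under condition given the lintegral of the density vanishes. -/
lemma ae_zero_of_setLIntegral_zero (hφ : Measurable φ) {A : Set (Word N)}
    (hA : MeasurableSet A) (h : ∫⁻ x in A, dens φ x ∂ν = 0) :
    ∀ᵐ x ∂ν, x ∈ A → φ x = 0 := by
  have h0 : dens φ =ᵐ[ν.restrict A] 0 :=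
    (lintegral_eq_zero_iff (measurable_dens hφ)).mp h
  have h0' : ∀ᵐ x ∂ν.restrict A, dens φ x = 0 := h0
  have h0'' := (ae_restrict_iff' hA).mp h0'
  filter_upwards [h0''] with x hx hxA
  have := hx hxA
  simp only [dens, Pi.zero_apply, pow_eq_zero_iff, ENNReal.coe_eq_zero, nnnorm_eq_zero] at this
  simpa using this

variable (hφ : Measurable φ)
  (hmap : ν.map (prepend i) = ν.withDensity (dens φ))

include hφ hmap

lemma lintegral_prepend (Φ : Word N → ℝ≥0∞) (hΦ : Measurable Φ) :
    ∫⁻ x, Φ (prepend i x) ∂ν = ∫⁻ x, Φ x * dens φ x ∂ν := by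
  have h1 : ∫⁻ x, Φ (prepend i x) ∂ν = ∫⁻ x, Φ x ∂(ν.map (prepend i)) :=
    (lintegral_map hΦ (measurable_prepend i)).symm
  rw [h1, hmap, lintegral_withDensity_eq_lintegral_mul ν (measurable_dens hφ) hΦ]
  apply lintegral_congr
  intro x
  exact mul_comm _ _

lemma setLIntegral_dens (A : Set (Word N)) (hA : MeasurableSet A) :
    ∫⁻ x in A, dens φ x ∂ν = ν (prepend i ⁻¹' A) := by
  rw [← withDensity_apply _ hA, ← hmap, Measure.map_apply (measurable_prepend i) hA]

/-- φ vanishes a.e. off the cylinder `[i]`. -/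
lemma supp_lemma : ∀ᵐ x ∂ν, x 0 ≠ i → φ x = 0 := by
  have hA : MeasurableSet {x : Word N | x 0 = i}ᶜ := (measurableSet_eval_eq 0 i).compl
  have h0 : ∫⁻ x in {x : Word N | x 0 = i}ᶜ, dens φ x ∂ν = 0 := by
    rw [setLIntegral_dens hφ hmap _ hA]
    have : prepend i ⁻¹' {x : Word N | x 0 = i}ᶜ = ∅ := by
      ext y; simp [prepend]
    rw [this, measure_empty]
  have := ae_zero_of_setLIntegral_zero hφ hA h0
  filter_upwards [this] with x hx h0i
  exact hx h0i

/-- φ vanishes a.e. on images of null sets under `prepend i`. -/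
lemma img_lemma {Z : Set (Word N)} (hZ : MeasurableSet Z) (hZ0 : ν Z = 0) :
    ∀ᵐ x ∂ν, x ∈ prepend i '' Z → φ x = 0 := by
  apply ae_zero_of_setLIntegral_zero hφ (measurableSet_prepend_image i hZ)
  rw [setLIntegral_dens hφ hmap _ (measurableSet_prepend_image i hZ),
    Set.preimage_image_eq Z (prepend_injective i)]
  exact hZ0

/-- key congruence lemma: multiplication by φ absorbs shift-composition null discrepancies. -/
lemma mul_shift_congr {a b : Word N → ℂ} (hab : a =ᵐ[ν] b) :
    (fun x => φ x * a (shift x)) =ᵐ[ν] fun x => φ x * b (shift x) := by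
  obtain ⟨Z, hZsub, hZm, hZ0⟩ := exists_measurable_superset_of_null (ae_iff.mp hab)
  filter_upwards [supp_lemma hφ hmap, img_lemma hφ hmap hZm hZ0] with x hsupp himg
  by_cases hz : shift x ∈ Z
  · by_cases h0 : x 0 = i
    · have hx : x ∈ prepend i '' Z := ⟨shift x, hz, prepend_shift h0⟩
      rw [himg hx]; ring
    · rw [hsupp h0]; ring
  · have : a (shift x) = b (shift x) := by
      by_contra hne
      exact hz (hZsub hne)
    rw [this]

lemma nonvanishing_prepend (hne : ∀ᵐ x ∂ν, x 0 = i → φ x ≠ 0) :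
    ∀ᵐ y ∂ν, φ (prepend i y) ≠ 0 := by
  set Bad := {x : Word N | x 0 = i ∧ φ x = 0} with hBad
  have hBm : MeasurableSet Bad :=
    (measurableSet_eval_eq 0 i).inter (hφ (measurableSet_singleton 0))
  have hB0 : ν Bad = 0 := by
    refine measure_mono_null ?_ (ae_iff.mp hne)
    rintro x ⟨h1, h2⟩
    simp only [Set.mem_setOf_eq]
    push_neg
    exact ⟨h1, h2⟩
  have hpre : ν (prepend i ⁻¹' Bad) = 0 := by
    rw [← setLIntegral_dens hφ hmap _ hBm]
    exact setLIntegral_measure_zero _ _ hB0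
  have : {y : Word N | φ (prepend i y) = 0} ⊆ prepend i ⁻¹' Bad := by
    intro y hy
    exact ⟨rfl, hy⟩
  have h0 : ν {y : Word N | φ (prepend i y) = 0} = 0 := measure_mono_null this hpre
  rw [ae_iff]
  convert h0 using 2
  ext y
  simp

end system

section lpops
variable (ν : Measure (Word N)) [IsFiniteMeasure ν]

lemma coeFn_sum {ι : Type*} [DecidableEq ι] (s : Finset ι) (F : ι → Lp ℂ 2 ν) :
    ⇑(∑ j ∈ s, F j) =ᵐ[ν] fun x => ∑ j ∈ s, F j x := by
  induction s using Finset.induction_on with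
  | empty =>
      simp only [Finset.sum_empty]
      filter_upwards [Lp.coeFn_zero ℂ 2 ν] with x hx
      simpa using hx
  | insert a s ha ih =>
      rw [Finset.sum_insert ha]
      filter_upwards [Lp.coeFn_add (F a) (∑ j ∈ s, F j), ih] with x h1 h2
      rw [Finset.sum_insert ha, h1]
      simp only [Pi.add_apply, h2]

/-- multiplication by the indicator of a measurable set, as an operation on `Lp`. -/
def indLp {A : Set (Word N)} (hA : MeasurableSet A) (u : Lp ℂ 2 ν) : Lp ℂ 2 ν :=
  ((Lp.memLp u).indicator hA).toLp (A.indicator ⇑u)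

lemma indLp_coeFn {A : Set (Word N)} (hA : MeasurableSet A) (u : Lp ℂ 2 ν) :
    ⇑(indLp ν hA u) =ᵐ[ν] A.indicator ⇑u :=
  MemLp.coeFn_toLp _

lemma indLp_congr {A : Set (Word N)} (hA : MeasurableSet A) {u v : Lp ℂ 2 ν}
    (h : ⇑u =ᵐ[ν] ⇑v) : indLp ν hA u = indLp ν hA v := by
  apply Lp.ext
  filter_upwards [indLp_coeFn ν hA u, indLp_coeFn ν hA v, h] with x h1 h2 h3
  rw [h1, h2]
  by_cases hx : x ∈ A
  · simp [Set.indicator_of_mem hx, h3]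
  · simp [Set.indicator_of_notMem hx]

lemma indLp_add {A : Set (Word N)} (hA : MeasurableSet A) (u v : Lp ℂ 2 ν) :
    indLp ν hA (u + v) = indLp ν hA u + indLp ν hA v := by
  apply Lp.ext
  filter_upwards [indLp_coeFn ν hA (u + v), indLp_coeFn ν hA u, indLp_coeFn ν hA v,
    Lp.coeFn_add (indLp ν hA u) (indLp ν hA v), Lp.coeFn_add u v] with x h1 h2 h3 h4 h5
  rw [h1, h4, Pi.add_apply, h2, h3]
  by_cases hx : x ∈ A
  · rw [Set.indicator_of_mem hx, Set.indicator_of_mem hx, Set.indicator_of_mem hx, h5,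
      Pi.add_apply]
  · rw [Set.indicator_of_notMem hx, Set.indicator_of_notMem hx, Set.indicator_of_notMem hx]
    simp

lemma indLp_sum {ι : Type*} [DecidableEq ι] {A : Set (Word N)} (hA : MeasurableSet A)
    (s : Finset ι) (F : ι → Lp ℂ 2 ν) :
    indLp ν hA (∑ j ∈ s, F j) = ∑ j ∈ s, indLp ν hA (F j) := by
  induction s using Finset.induction_on with
  | empty =>
      simp only [Finset.sum_empty]
      apply Lp.ext
      filter_upwards [indLp_coeFn ν hA (0 : Lp ℂ 2 ν), Lp.coeFn_zero ℂ 2 ν] with x h1 h2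
      rw [h1]
      by_cases hx : x ∈ A
      · rw [Set.indicator_of_mem hx, h2]
      · rw [Set.indicator_of_notMem hx, h2]
        simp
  | insert a s ha ih =>
      rw [Finset.sum_insert ha, Finset.sum_insert ha, indLp_add, ih]

lemma indLp_of_vanish {A : Set (Word N)} (hA : MeasurableSet A) {u : Lp ℂ 2 ν}
    (h : ∀ᵐ x ∂ν, x ∉ A → ⇑u x = 0) : indLp ν hA u = u := by
  apply Lp.ext
  filter_upwards [indLp_coeFn ν hA u, h] with x h1 h2
  rw [h1]
  by_cases hx : x ∈ A
  · simp [Set.indicator_of_mem hx]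
  · simp [Set.indicator_of_notMem hx, h2 hx]

lemma indLp_of_disjoint {A B : Set (Word N)} (hA : MeasurableSet A) {u : Lp ℂ 2 ν}
    (hd : A ∩ B = ∅) (h : ∀ᵐ x ∂ν, x ∉ B → ⇑u x = 0) : indLp ν hA u = 0 := by
  apply Lp.ext
  filter_upwards [indLp_coeFn ν hA u, h, Lp.coeFn_zero ℂ 2 ν] with x h1 h2 h3
  rw [h1, h3]
  by_cases hx : x ∈ A
  · have hxB : x ∉ B := fun hB => by
      have : x ∈ A ∩ B := ⟨hx, hB⟩
      rw [hd] at this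
      exact this
    simp [Set.indicator_of_mem hx, h2 hxB]
  · simp [Set.indicator_of_notMem hx]

/-- decomposition of an `Lp` element over the level-`n` cylinder partition. -/
lemma sum_indLp (n : ℕ) (u : Lp ℂ 2 ν) :
    ∑ v : Fin n → Fin N, indLp ν (measurableSet_cyl (List.ofFn v)) u = u := by
  classical
  apply Lp.ext
  filter_upwards [coeFn_sum ν Finset.univ
    (fun v : Fin n → Fin N => indLp ν (measurableSet_cyl (List.ofFn v)) u),
    ae_all_iff.mpr (fun v : Fin n → Fin N => indLp_coeFn ν (measurableSet_cyl (List.ofFn v)) u)]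
    with x h1 h2
  rw [h1]
  have hx : ∀ v : Fin n → Fin N,
      (indLp ν (measurableSet_cyl (List.ofFn v)) u : Word N → ℂ) x
        = (cyl (List.ofFn v)).indicator (⇑u) x := fun v => h2 v
  rw [Finset.sum_congr rfl (fun v _ => hx v)]
  have hmem : x ∈ cyl (List.ofFn (fun k : Fin n => x k)) := by
    rw [mem_cyl_ofFn]; intro k; rfl
  rw [Finset.sum_eq_single (fun k : Fin n => x (k : ℕ))]
  · simp [Set.indicator_of_mem hmem]
  · intro v _ hv
    have hnot : x ∉ cyl (List.ofFn v) := by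
      intro hmemv
      rw [mem_cyl_ofFn] at hmemv
      exact hv (funext fun k => (hmemv k).symm)
    simp [Set.indicator_of_notMem hnot]
  · intro hnotmem
    exact absurd (Finset.mem_univ _) hnotmem

end lpops

section oneop
variable {ν : Measure (Word N)} [IsFiniteMeasure ν] {i : Fin N} {φ : Word N → ℂ}
  (hφ : Measurable φ) (hmap : ν.map (prepend i) = ν.withDensity (dens φ))
  {T : Lp ℂ 2 ν →L[ℂ] Lp ℂ 2 ν}
  (hT : ∀ g : Lp ℂ 2 ν, ⇑(T g) =ᵐ[ν] fun x => φ x * g (shift x))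

include hφ hmap hT

/-- the range of the operator `T` is contained in the functions supported on cylinders. -/
lemma T_vanish {w : List (Fin N)} {g : Lp ℂ 2 ν}
    (hg : ∀ᵐ x ∂ν, x ∉ cyl w → ⇑g x = 0) :
    ∀ᵐ x ∂ν, x ∉ cyl (i :: w) → ⇑(T g) x = 0 := by
  obtain ⟨G, hGm, hGg⟩ :
      ∃ G : Word N → ℂ, Measurable G ∧ ⇑g =ᵐ[ν] G := by
    have h := (Lp.memLp g).aestronglyMeasurable
    exact ⟨h.mk _, h.stronglyMeasurable_mk.measurable, h.ae_eq_mk⟩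
  set B : Set (Word N) := {x | ¬ G x = 0} \ cyl w with hB
  have hBm : MeasurableSet B :=
    ((hGm (measurableSet_singleton 0)).compl).diff (measurableSet_cyl w)
  have hB0 : ν B = 0 := by
    have hsub : B ⊆ {x | ⇑g x ≠ G x} ∪ {x | ¬ (x ∉ cyl w → ⇑g x = 0)} := by
      rintro x ⟨hG0, hw⟩
      by_cases hgx : ⇑g x = G x
      · right
        simp only [Set.mem_setOf_eq]
        push_neg
        refine ⟨hw, ?_⟩
        rw [hgx]
        exact hG0
      · left; exact hgx
    exact measure_mono_null hsub
      (measure_union_null (ae_iff.mp hGg) (ae_iff.mp hg))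
  filter_upwards [hT g, mul_shift_congr hφ hmap hGg, supp_lemma hφ hmap,
    img_lemma hφ hmap hBm hB0] with x h1 h2 hsupp himg hnotin
  simp only [h1, h2]
  by_cases h0 : x 0 = i
  · have hsx : shift x ∉ cyl w := by
      intro hmemw
      exact hnotin (mem_cyl_cons.mpr ⟨h0, hmemw⟩)
    by_cases hGz : G (shift x) = 0
    · rw [hGz]; ring
    · have : x ∈ prepend i '' B := ⟨shift x, ⟨hGz, hsx⟩, prepend_shift h0⟩
      rw [himg this]; ring
  · rw [hsupp h0]; ring

/-- surjectivity of `T` onto functions supported on the extended cylinder. -/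
lemma T_surj (hne : ∀ᵐ x ∂ν, x 0 = i → φ x ≠ 0) {w : List (Fin N)} {g : Lp ℂ 2 ν}
    (hg : ∀ᵐ x ∂ν, x ∉ cyl (i :: w) → ⇑g x = 0) :
    ∃ u : Lp ℂ 2 ν, (∀ᵐ x ∂ν, x ∉ cyl w → ⇑u x = 0) ∧ T u = g := by
  obtain ⟨G, hGm, hGg⟩ :
      ∃ G : Word N → ℂ, Measurable G ∧ ⇑g =ᵐ[ν] G := by
    have h := (Lp.memLp g).aestronglyMeasurable
    exact ⟨h.mk _, h.stronglyMeasurable_mk.measurable, h.ae_eq_mk⟩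
  have hGvan : ∀ᵐ x ∂ν, x ∉ cyl (i :: w) → G x = 0 := by
    filter_upwards [hGg, hg] with x h1 h2 hx
    rw [← h1]
    exact h2 hx
  set U : Word N → ℂ := fun y => G (prepend i y) / φ (prepend i y) with hU
  have hUm : Measurable U :=
    (hGm.comp (measurable_prepend i)).div (hφ.comp (measurable_prepend i))
  set Φ : Word N → ℝ≥0∞ := fun x => (‖G x / φ x‖₊ : ℝ≥0∞) ^ 2 with hΦdef
  have hΦm : Measurable Φ := by
    apply Measurable.pow_const
    exact ((hGm.div hφ).nnnorm).coe_nnreal_ennreal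
  have hUsq : ∀ y, (‖U y‖₊ : ℝ≥0∞) ^ 2 = Φ (prepend i y) := fun y => rfl
  have hΦle : ∀ x, Φ x * dens φ x ≤ (‖G x‖₊ : ℝ≥0∞) ^ 2 := by
    intro x
    by_cases hzero : φ x = 0
    · simp [hΦdef, hzero, dens]
    · have h2 : ‖G x / φ x‖₊ * ‖φ x‖₊ = ‖G x‖₊ := by
        rw [← nnnorm_mul, div_mul_cancel₀ _ hzero]
      calc Φ x * dens φ x
          = (‖G x / φ x‖₊ : ℝ≥0∞) ^ 2 * (‖φ x‖₊ : ℝ≥0∞) ^ 2 := rfl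
        _ = ((‖G x / φ x‖₊ * ‖φ x‖₊ : NNReal) : ℝ≥0∞) ^ 2 := by
            rw [ENNReal.coe_mul, mul_pow]
        _ ≤ (‖G x‖₊ : ℝ≥0∞) ^ 2 := by rw [h2]
  have hfin : ∫⁻ y, (‖U y‖₊ : ℝ≥0∞) ^ 2 ∂ν < ⊤ := by
    calc ∫⁻ y, (‖U y‖₊ : ℝ≥0∞) ^ 2 ∂ν = ∫⁻ y, Φ (prepend i y) ∂ν := by
          apply lintegral_congr; intro y; exact hUsq y
      _ = ∫⁻ x, Φ x * dens φ x ∂ν := lintegral_prepend hφ hmap Φ hΦm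
      _ ≤ ∫⁻ x, (‖G x‖₊ : ℝ≥0∞) ^ 2 ∂ν := lintegral_mono hΦle
      _ = ∫⁻ x, (‖⇑g x‖₊ : ℝ≥0∞) ^ 2 ∂ν := by
          apply lintegral_congr_ae
          filter_upwards [hGg] with x hx
          rw [hx]
      _ < ⊤ := lintegral_sq_lt_top (Lp.memLp g)
  have hUmem : MemLp U 2 ν := memℒp_two_of hUm hfin
  refine ⟨hUmem.toLp U, ?_, ?_⟩
  · -- vanishing of U off cyl w
    set E : Set (Word N) := {x | ¬ G x = 0} \ cyl (i :: w) with hE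
    have hEm : MeasurableSet E :=
      ((hGm (measurableSet_singleton 0)).compl).diff (measurableSet_cyl (i :: w))
    have hE0 : ν E = 0 := by
      refine measure_mono_null ?_ (ae_iff.mp hGvan)
      rintro x ⟨hG0, hw⟩
      simp only [Set.mem_setOf_eq]
      push_neg
      exact ⟨hw, hG0⟩
    have hpre0 : ν (prepend i ⁻¹' E) = 0 := by
      rw [← setLIntegral_dens hφ hmap _ hEm]
      exact setLIntegral_measure_zero _ _ hE0
    have hae : ∀ᵐ y ∂ν, y ∉ prepend i ⁻¹' E := by
      rw [ae_iff]
      simp only [not_not]; exact hpre0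
    filter_upwards [hUmem.coeFn_toLp, hae] with y h1 h2 hyw
    rw [h1]
    have hmemc : prepend i y ∉ cyl (i :: w) := by
      intro hc
      rw [mem_cyl_cons] at hc
      exact hyw (by simpa using hc.2)
    have : G (prepend i y) = 0 := by
      by_contra hne0
      exact h2 ⟨hne0, hmemc⟩
    show G (prepend i y) / φ (prepend i y) = 0
    rw [this, zero_div]
  · -- T u = g
    apply Lp.ext
    have hcongr := mul_shift_congr hφ hmap (hUmem.coeFn_toLp : ⇑(hUmem.toLp U) =ᵐ[ν] U)
    filter_upwards [hT (hUmem.toLp U), hcongr, supp_lemma hφ hmap, hne, hGvan, hGg]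
      with x h1 h2 hsupp hnex hGv hGgx
    simp only [h1, h2]
    by_cases h0 : x 0 = i
    · have hps : prepend i (shift x) = x := prepend_shift h0
      have hUs : U (shift x) = G x / φ x := by
        show G (prepend i (shift x)) / φ (prepend i (shift x)) = G x / φ x
        rw [hps]
      have hφx : φ x ≠ 0 := hnex h0
      rw [hUs, hGgx, mul_comm, div_mul_cancel₀ _ hφx]
    · have hx1 : φ x = 0 := hsupp h0
      have hx2 : G x = 0 := by
        apply hGv
        intro hc
        exact h0 (mem_cyl_cons.mp hc).1
      rw [hx1, hGgx, hx2]
      ring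

end oneop

lemma cyl_ofFn_inter_eq_empty {n : ℕ} {v v' : Fin n → Fin N} (h : v ≠ v') :
    cyl (List.ofFn v) ∩ cyl (List.ofFn v') = ∅ := by
  ext x
  simp only [Set.mem_inter_iff, Set.mem_empty_iff_false, iff_false]
  rintro ⟨h1, h2⟩
  rw [mem_cyl_ofFn] at h1 h2
  exact h (funext fun k => by rw [← h1 k, ← h2 k])

section wordops
variable {ν : Measure (Word N)} [IsFiniteMeasure ν]
  {φs : Fin N → Word N → ℂ} (hφs : ∀ i, Measurable (φs i))
  (hmaps : ∀ i, ν.map (prepend i) = ν.withDensity (dens (φs i)))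
  (hnes : ∀ i, ∀ᵐ x ∂ν, x 0 = i → φs i x ≠ 0)
  {Ts : Fin N → (Lp ℂ 2 ν →L[ℂ] Lp ℂ 2 ν)}
  (hTs : ∀ i (g : Lp ℂ 2 ν), ⇑(Ts i g) =ᵐ[ν] fun x => φs i x * g (shift x))

/-- the operator associated to a word. -/
def wordOp (Ts : Fin N → (Lp ℂ 2 ν →L[ℂ] Lp ℂ 2 ν)) :
    List (Fin N) → (Lp ℂ 2 ν →L[ℂ] Lp ℂ 2 ν)
  | [] => ContinuousLinearMap.id ℂ _
  | i :: w => (Ts i).comp (wordOp Ts w)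

include hφs hmaps hTs in
lemma wordOp_vanish (w : List (Fin N)) (u : Lp ℂ 2 ν) :
    ∀ᵐ x ∂ν, x ∉ cyl w → ⇑(wordOp Ts w u) x = 0 := by
  induction w generalizing u with
  | nil =>
      rw [cyl_nil]
      filter_upwards with x hx
      exact absurd (Set.mem_univ x) hx
  | cons i w ih =>
      have hco : wordOp Ts (i :: w) u = Ts i (wordOp Ts w u) := rfl
      rw [hco]
      exact T_vanish (hφs i) (hmaps i) (hTs i) (ih u)

include hφs hmaps hnes hTs in
lemma wordOp_surj (w : List (Fin N)) (g : Lp ℂ 2 ν)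
    (hg : ∀ᵐ x ∂ν, x ∉ cyl w → ⇑g x = 0) : ∃ u, wordOp Ts w u = g := by
  induction w generalizing g with
  | nil => exact ⟨g, rfl⟩
  | cons i w ih =>
      obtain ⟨u₁, hvan, hTu⟩ := T_surj (hφs i) (hmaps i) (hTs i) (hnes i) hg
      obtain ⟨u, hu⟩ := ih u₁ hvan
      refine ⟨u, ?_⟩
      have hco : wordOp Ts (i :: w) u = Ts i (wordOp Ts w u) := rfl
      rw [hco, hu, hTu]

end wordops

section equiv
variable {μ μ' : Measure (Word N)} [IsFiniteMeasure μ] [IsFiniteMeasure μ']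
  {φs φs' : Fin N → Word N → ℂ}
  (hφs : ∀ i, Measurable (φs i)) (hφs' : ∀ i, Measurable (φs' i))
  (hmaps : ∀ i, μ.map (prepend i) = μ.withDensity (dens (φs i)))
  (hmaps' : ∀ i, μ'.map (prepend i) = μ'.withDensity (dens (φs' i)))
  (hnes : ∀ i, ∀ᵐ x ∂μ, x 0 = i → φs i x ≠ 0)
  (hnes' : ∀ i, ∀ᵐ x ∂μ', x 0 = i → φs' i x ≠ 0)
  {Ts : Fin N → (Lp ℂ 2 μ →L[ℂ] Lp ℂ 2 μ)}
  {Ts' : Fin N → (Lp ℂ 2 μ' →L[ℂ] Lp ℂ 2 μ')}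
  (hTs : ∀ i (g : Lp ℂ 2 μ), ⇑(Ts i g) =ᵐ[μ] fun x => φs i x * g (shift x))
  (hTs' : ∀ i (g : Lp ℂ 2 μ'), ⇑(Ts' i g) =ᵐ[μ'] fun x => φs' i x * g (shift x))
  (W : Lp ℂ 2 μ' ≃ₗᵢ[ℂ] Lp ℂ 2 μ)
  (hW : ∀ i g, Ts i (W g) = W (Ts' i g))

include hW in
lemma W_word (w : List (Fin N)) (g : Lp ℂ 2 μ') :
    wordOp Ts w (W g) = W (wordOp Ts' w g) := by
  induction w with
  | nil => rfl
  | cons i w ih =>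
      have hco : wordOp Ts (i :: w) (W g) = Ts i (wordOp Ts w (W g)) := rfl
      have hco' : wordOp Ts' (i :: w) g = Ts' i (wordOp Ts' w g) := rfl
      rw [hco, hco', ih, hW]

include hφs hφs' hmaps hmaps' hnes' hTs hTs' hW in
lemma W_ind (n : ℕ) (v : Fin n → Fin N) (u : Lp ℂ 2 μ') :
    W (indLp μ' (measurableSet_cyl (List.ofFn v)) u)
      = indLp μ (measurableSet_cyl (List.ofFn v)) (W u) := by
  classical
  have hpiece : ∀ v' : Fin n → Fin N, ∀ᵐ x ∂μ,
      x ∉ cyl (List.ofFn v') →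
        ⇑(W (indLp μ' (measurableSet_cyl (List.ofFn v')) u)) x = 0 := by
    intro v'
    have hvan' : ∀ᵐ x ∂μ', x ∉ cyl (List.ofFn v') →
        ⇑(indLp μ' (measurableSet_cyl (List.ofFn v')) u) x = 0 := by
      filter_upwards [indLp_coeFn μ' (measurableSet_cyl (List.ofFn v')) u] with x h1 hx
      rw [h1, Set.indicator_of_notMem hx]
    obtain ⟨z, hz⟩ := wordOp_surj hφs' hmaps' hnes' hTs' (List.ofFn v') _ hvan'
    rw [← hz, ← W_word W hW]
    exact wordOp_vanish hφs hmaps hTs (List.ofFn v') (W z)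
  have hdec : W u = ∑ v' : Fin n → Fin N,
      W (indLp μ' (measurableSet_cyl (List.ofFn v')) u) := by
    conv_lhs => rw [← sum_indLp μ' n u]
    rw [map_sum]
  rw [hdec, indLp_sum]
  rw [Finset.sum_eq_single v]
  · exact (indLp_of_vanish μ _ (hpiece v)).symm
  · intro v' _ hv'
    exact indLp_of_disjoint μ _ (cyl_ofFn_inter_eq_empty (Ne.symm hv')) (hpiece v')
  · intro hmem
    exact absurd (Finset.mem_univ _) hmem

include hφs hφs' hmaps hmaps' hnes' hTs hTs' hW in
lemma W_ind_cyl (w : List (Fin N)) (u : Lp ℂ 2 μ') :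
    W (indLp μ' (measurableSet_cyl w) u) = indLp μ (measurableSet_cyl w) (W u) := by
  have h := W_ind hφs hφs' hmaps hmaps' hnes' hTs hTs' W hW w.length w.get u
  rw [List.ofFn_get] at h
  exact h

include hφs hφs' hmaps hmaps' hnes' hTs hTs' hW in
lemma W_symm_ind (w : List (Fin N)) (u' : Lp ℂ 2 μ) :
    W.symm (indLp μ (measurableSet_cyl w) u')
      = indLp μ' (measurableSet_cyl w) (W.symm u') := by
  have h := W_ind_cyl hφs hφs' hmaps hmaps' hnes' hTs hTs' W hW w (W.symm u')
  rw [W.apply_symm_apply] at h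
  exact (W.symm_apply_eq.mpr h.symm)

end equiv

lemma ofReal_norm_sq (z : ℂ) :
    ENNReal.ofReal (‖z‖ ^ 2) = (‖z‖₊ : ℝ≥0∞) ^ 2 := by
  rw [ENNReal.ofReal_pow (norm_nonneg z), ofReal_norm, enorm_eq_nnnorm]

section onelp
variable (ν : Measure (Word N)) [IsFiniteMeasure ν]

/-- the constant function `1` as an element of `L²`. -/
def oneLp : Lp ℂ 2 ν := indicatorConstLp 2 MeasurableSet.univ (measure_ne_top ν _) (1:ℂ)

lemma oneLp_coeFn : ⇑(oneLp ν) =ᵐ[ν] fun _ => (1:ℂ) := by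
  refine Filter.EventuallyEq.trans indicatorConstLp_coeFn ?_
  rw [Set.indicator_univ]

lemma indLp_one_eq {A : Set (Word N)} (hA : MeasurableSet A) :
    indLp ν hA (oneLp ν) = indicatorConstLp 2 hA (measure_ne_top ν A) (1:ℂ) := by
  apply Lp.ext
  filter_upwards [indLp_coeFn ν hA (oneLp ν), oneLp_coeFn ν,
    indicatorConstLp_coeFn (p := 2) (hs := hA) (hμs := measure_ne_top ν A) (c := (1:ℂ))]
    with x h1 h2 h3
  rw [h1, h3]
  by_cases hx : x ∈ A
  · rw [Set.indicator_of_mem hx, Set.indicator_of_mem hx, h2]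
  · rw [Set.indicator_of_notMem hx, Set.indicator_of_notMem hx]

lemma lintegral_sq_indicator_one {A : Set (Word N)} (hA : MeasurableSet A) :
    ∫⁻ x, (‖A.indicator (fun _ => (1:ℂ)) x‖₊ : ℝ≥0∞) ^ 2 ∂ν = ν A := by
  have hpt : ∀ x, (‖A.indicator (fun _ => (1:ℂ)) x‖₊ : ℝ≥0∞) ^ 2
      = A.indicator (fun _ => (1:ℝ≥0∞)) x := by
    intro x
    by_cases hx : x ∈ A
    · simp [Set.indicator_of_mem hx]
    · simp [Set.indicator_of_notMem hx]
  rw [lintegral_congr hpt, lintegral_indicator hA, setLIntegral_one]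

lemma lintegral_sq_indicator {A : Set (Word N)} (hA : MeasurableSet A) (q : Word N → ℂ) :
    ∫⁻ x, (‖A.indicator q x‖₊ : ℝ≥0∞) ^ 2 ∂ν = ∫⁻ x in A, dens q x ∂ν := by
  have hpt : ∀ x, (‖A.indicator q x‖₊ : ℝ≥0∞) ^ 2 = A.indicator (dens q) x := by
    intro x
    by_cases hx : x ∈ A
    · simp [Set.indicator_of_mem hx, dens]
    · simp [Set.indicator_of_notMem hx]
  rw [lintegral_congr hpt, lintegral_indicator hA]

end onelp

lemma lintegral_sq_eq_of_norm_eq {ν ν' : Measure (Word N)} {u : Lp ℂ 2 ν} {u' : Lp ℂ 2 ν'}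
    (h : ‖u‖ = ‖u'‖) :
    ∫⁻ x, (‖⇑u x‖₊ : ℝ≥0∞) ^ 2 ∂ν = ∫⁻ x, (‖⇑u' x‖₊ : ℝ≥0∞) ^ 2 ∂ν' := by
  have h1 : eLpNorm ⇑u 2 ν = eLpNorm ⇑u' 2 ν' := by
    rw [Lp.norm_def, Lp.norm_def] at h
    exact (ENNReal.toReal_eq_toReal_iff' (Lp.eLpNorm_ne_top u) (Lp.eLpNorm_ne_top u')).mp h
  rw [eLpNorm_two_eq, eLpNorm_two_eq] at h1
  have key : ∀ a : ℝ≥0∞, (a ^ (1/(2:ℝ))) ^ (2:ℝ) = a := by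
    intro a
    rw [← ENNReal.rpow_mul]
    norm_num
  have h2 : ((∫⁻ x, (‖⇑u x‖₊ : ℝ≥0∞) ^ 2 ∂ν) ^ (1/(2:ℝ))) ^ (2:ℝ)
      = ((∫⁻ x, (‖⇑u' x‖₊ : ℝ≥0∞) ^ 2 ∂ν') ^ (1/(2:ℝ))) ^ (2:ℝ) := by rw [h1]
  rw [key, key] at h2
  exact h2

/-- the measure identity extracted from an intertwiner respecting indicators. -/
lemma key_measure {ν ν' : Measure (Word N)} [IsFiniteMeasure ν] [IsFiniteMeasure ν']
    (V : Lp ℂ 2 ν' ≃ₗᵢ[ℂ] Lp ℂ 2 ν)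
    (hVind : ∀ w (u : Lp ℂ 2 ν'), V (indLp ν' (measurableSet_cyl w) u)
      = indLp ν (measurableSet_cyl w) (V u)) :
    ∃ hfun : Word N → ℂ, Measurable hfun ∧ ⇑(V (oneLp ν')) =ᵐ[ν] hfun ∧
      ν' = ν.withDensity (dens hfun) := by
  obtain ⟨hfun, hfm, hfae⟩ : ∃ hfun, Measurable hfun ∧ ⇑(V (oneLp ν')) =ᵐ[ν] hfun := by
    have h := (Lp.memLp (V (oneLp ν'))).aestronglyMeasurable
    exact ⟨h.mk _, h.stronglyMeasurable_mk.measurable, h.ae_eq_mk⟩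
  refine ⟨hfun, hfm, hfae, ?_⟩
  have hcyl : ∀ w : List (Fin N), ν' (cyl w) = (ν.withDensity (dens hfun)) (cyl w) := by
    intro w
    set A := cyl w with hAdef
    have hA : MeasurableSet A := measurableSet_cyl w
    have hnorm : ‖indLp ν' hA (oneLp ν')‖ = ‖indLp ν hA (V (oneLp ν'))‖ := by
      rw [← hVind w (oneLp ν'), V.norm_map]
    have hl := lintegral_sq_eq_of_norm_eq hnorm
    have e1 : ⇑(indLp ν' hA (oneLp ν')) =ᵐ[ν'] A.indicator (fun _ => (1:ℂ)) := by
      filter_upwards [indLp_coeFn ν' hA (oneLp ν'), oneLp_coeFn ν'] with x h1 h2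
      rw [h1]
      by_cases hx : x ∈ A
      · rw [Set.indicator_of_mem hx, Set.indicator_of_mem hx, h2]
      · rw [Set.indicator_of_notMem hx, Set.indicator_of_notMem hx]
    have e2 : ⇑(indLp ν hA (V (oneLp ν'))) =ᵐ[ν] A.indicator hfun := by
      filter_upwards [indLp_coeFn ν hA (V (oneLp ν')), hfae] with x h1 h2
      rw [h1]
      by_cases hx : x ∈ A
      · rw [Set.indicator_of_mem hx, Set.indicator_of_mem hx, h2]
      · rw [Set.indicator_of_notMem hx, Set.indicator_of_notMem hx]
    have hlhs : ∫⁻ x, (‖⇑(indLp ν' hA (oneLp ν')) x‖₊ : ℝ≥0∞) ^ 2 ∂ν' = ν' A := by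
      have hc : (fun x => (‖⇑(indLp ν' hA (oneLp ν')) x‖₊ : ℝ≥0∞) ^ 2)
          =ᵐ[ν'] fun x => (‖A.indicator (fun _ => (1:ℂ)) x‖₊ : ℝ≥0∞) ^ 2 := by
        filter_upwards [e1] with x hx
        rw [hx]
      rw [lintegral_congr_ae hc]
      exact lintegral_sq_indicator_one ν' hA
    have hrhs : ∫⁻ x, (‖⇑(indLp ν hA (V (oneLp ν'))) x‖₊ : ℝ≥0∞) ^ 2 ∂ν
        = (ν.withDensity (dens hfun)) A := by
      have hc : (fun x => (‖⇑(indLp ν hA (V (oneLp ν'))) x‖₊ : ℝ≥0∞) ^ 2)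
          =ᵐ[ν] fun x => (‖A.indicator hfun x‖₊ : ℝ≥0∞) ^ 2 := by
        filter_upwards [e2] with x hx
        rw [hx]
      rw [lintegral_congr_ae hc, lintegral_sq_indicator ν hA hfun, withDensity_apply _ hA]
    rw [← hlhs, hl, hrhs]
  refine ext_of_generate_finite {s : Set (Word N) | ∃ w, s = cyl w}
    generateFrom_cyl isPiSystem_cyl ?_ ?_
  · rintro s ⟨w, rfl⟩
    exact hcyl w
  · rw [← cyl_nil (N := N)]
    exact hcyl []

/-- density of the span of cylinder indicators. -/
lemma mem_closure_span (ν : Measure (Word N)) [IsFiniteMeasure ν] (g : Lp ℂ 2 ν) :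
    g ∈ (Submodule.span ℂ (Set.range (fun w : List (Fin N) =>
      (indicatorConstLp 2 (measurableSet_cyl w) (measure_ne_top ν _) (1:ℂ) : Lp ℂ 2 ν)))).topologicalClosure := by
  set K := (Submodule.span ℂ (Set.range (fun w : List (Fin N) =>
      (indicatorConstLp 2 (measurableSet_cyl w) (measure_ne_top ν _) (1:ℂ) : Lp ℂ 2 ν)))).topologicalClosure with hK
  haveI : CompleteSpace K := (Submodule.isClosed_topologicalClosure _).completeSpace_coe
  have htop : K = ⊤ := by
    rw [← Submodule.orthogonal_eq_bot_iff, Submodule.eq_bot_iff]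
    intro g' hg'
    have hInt : Integrable ⇑g' ν := (Lp.memLp g').integrable one_le_two
    have hint : ∀ w : List (Fin N), ∫ x in cyl w, ⇑g' x ∂ν = 0 := by
      intro w
      have hmem : (indicatorConstLp 2 (measurableSet_cyl w) (measure_ne_top ν _) (1:ℂ)
          : Lp ℂ 2 ν) ∈ K :=
        Submodule.le_topologicalClosure _ (Submodule.subset_span ⟨w, rfl⟩)
      have h0 := (Submodule.mem_orthogonal _ g').mp hg' _ hmem
      rwa [L2.inner_indicatorConstLp_one (measurableSet_cyl w) (measure_ne_top ν _) g'] at h0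
    have hint_univ : ∫ x, ⇑g' x ∂ν = 0 := by
      have h0 := hint []
      rwa [cyl_nil, Measure.restrict_univ] at h0
    have hall : ∀ t : Set (Word N), MeasurableSet t → ∫ x in t, ⇑g' x ∂ν = 0 := by
      intro t ht
      refine MeasurableSpace.induction_on_inter (C := fun t _ => ∫ x in t, ⇑g' x ∂ν = 0)
        generateFrom_cyl isPiSystem_cyl ?_ ?_ ?_ ?_ t ht
      · simp
      · rintro s ⟨w, rfl⟩
        exact hint w
      · intro s hs hsint
        have hadd := integral_add_compl hs hInt
        have h2 : ∫ x in sᶜ, ⇑g' x ∂ν = (∫ x, ⇑g' x ∂ν) - ∫ x in s, ⇑g' x ∂ν := by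
          rw [← hadd]; ring
        rw [h2, hint_univ, hsint, sub_zero]
      · intro f hd hm hzero
        rw [integral_iUnion hm hd hInt.integrableOn]
        simp [hzero]
    have hzero : ⇑g' =ᵐ[ν] 0 := by
      apply hInt.ae_eq_zero_of_forall_setIntegral_eq_zero
      intro s hs _
      exact hall s hs
    exact Lp.eq_zero_iff_ae_eq_zero.mpr hzero
  rw [htop]
  trivial

section mulh
variable {ν ν' : Measure (Word N)} [IsFiniteMeasure ν] [IsFiniteMeasure ν']
  {q : Word N → ℂ} (hqm : Measurable q) (hden : ν' = ν.withDensity (dens q))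

include hqm hden in
lemma mulH_congr {a b : Word N → ℂ} (hab : a =ᵐ[ν'] b) :
    (fun x => q x * a x) =ᵐ[ν] fun x => q x * b x := by
  obtain ⟨Z, hZsub, hZm, hZ0⟩ := exists_measurable_superset_of_null (ae_iff.mp hab)
  have hz : ∫⁻ x in Z, dens q x ∂ν = 0 := by
    rw [← withDensity_apply _ hZm, ← hden]
    exact hZ0
  filter_upwards [ae_zero_of_setLIntegral_zero hqm hZm hz] with x hx
  by_cases hxZ : x ∈ Z
  · rw [hx hxZ]
    ring
  · have hab' : a x = b x := by
      by_contra hne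
      exact hxZ (hZsub hne)
    rw [hab']

include hqm hden in
lemma mulH_lintegral {g : Word N → ℂ} (hgm : Measurable g) :
    ∫⁻ x, (‖q x * g x‖₊ : ℝ≥0∞) ^ 2 ∂ν = ∫⁻ x, (‖g x‖₊ : ℝ≥0∞) ^ 2 ∂ν' := by
  rw [hden, lintegral_withDensity_eq_lintegral_mul ν (measurable_dens hqm)
    (by exact (hgm.nnnorm).coe_nnreal_ennreal.pow_const 2)]
  apply lintegral_congr
  intro x
  show (‖q x * g x‖₊ : ℝ≥0∞) ^ 2 = dens q x * (‖g x‖₊ : ℝ≥0∞) ^ 2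
  rw [nnnorm_mul, dens]
  push_cast
  ring

include hqm hden in
lemma mulH_lint_coe (g : Lp ℂ 2 ν') {G : Word N → ℂ} (hGm : Measurable G)
    (hG : ⇑g =ᵐ[ν'] G) :
    ∫⁻ x, (‖q x * ⇑g x‖₊ : ℝ≥0∞) ^ 2 ∂ν = ∫⁻ x, (‖⇑g x‖₊ : ℝ≥0∞) ^ 2 ∂ν' := by
  have h1 : (fun x => q x * ⇑g x) =ᵐ[ν] fun x => q x * G x := mulH_congr hqm hden hG
  calc ∫⁻ x, (‖q x * ⇑g x‖₊ : ℝ≥0∞) ^ 2 ∂ν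
      = ∫⁻ x, (‖q x * G x‖₊ : ℝ≥0∞) ^ 2 ∂ν := by
        apply lintegral_congr_ae
        filter_upwards [h1] with x hx
        rw [hx]
    _ = ∫⁻ x, (‖G x‖₊ : ℝ≥0∞) ^ 2 ∂ν' := mulH_lintegral hqm hden hGm
    _ = ∫⁻ x, (‖⇑g x‖₊ : ℝ≥0∞) ^ 2 ∂ν' := by
        apply lintegral_congr_ae
        filter_upwards [hG] with x hx
        rw [hx]

include hqm hden in
lemma mulH_memℒp (g : Lp ℂ 2 ν') : MemLp (fun x => q x * ⇑g x) 2 ν := by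
  obtain ⟨G, hGm, hG⟩ : ∃ G, Measurable G ∧ ⇑g =ᵐ[ν'] G := by
    have h := (Lp.memLp g).aestronglyMeasurable
    exact ⟨h.mk _, h.stronglyMeasurable_mk.measurable, h.ae_eq_mk⟩
  have h1 : (fun x => q x * ⇑g x) =ᵐ[ν] fun x => q x * G x := mulH_congr hqm hden hG
  refine ⟨((hqm.mul hGm).aestronglyMeasurable).congr h1.symm, ?_⟩
  rw [eLpNorm_two_eq, mulH_lint_coe hqm hden g hGm hG]
  exact ENNReal.rpow_lt_top_of_nonneg (by norm_num) (lintegral_sq_lt_top (Lp.memLp g)).ne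

/-- multiplication by `q` as a linear isometry between weighted `L²` spaces. -/
def mulHiso : Lp ℂ 2 ν' →ₗᵢ[ℂ] Lp ℂ 2 ν where
  toFun g := (mulH_memℒp hqm hden g).toLp _
  map_add' g1 g2 := by
    apply Lp.ext
    filter_upwards [MemLp.coeFn_toLp (mulH_memℒp hqm hden (g1 + g2)),
      MemLp.coeFn_toLp (mulH_memℒp hqm hden g1),
      MemLp.coeFn_toLp (mulH_memℒp hqm hden g2),
      Lp.coeFn_add ((mulH_memℒp hqm hden g1).toLp _) ((mulH_memℒp hqm hden g2).toLp _),
      mulH_congr hqm hden (Lp.coeFn_add g1 g2)] with x h1 h2 h3 h4 h5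
    rw [h1, h4, Pi.add_apply, h2, h3, h5, Pi.add_apply]
    ring
  map_smul' c g := by
    simp only [RingHom.id_apply]
    apply Lp.ext
    filter_upwards [MemLp.coeFn_toLp (mulH_memℒp hqm hden (c • g)),
      MemLp.coeFn_toLp (mulH_memℒp hqm hden g),
      Lp.coeFn_smul c ((mulH_memℒp hqm hden g).toLp _),
      mulH_congr hqm hden (Lp.coeFn_smul c g)] with x h1 h2 h3 h4
    rw [h1, h3, Pi.smul_apply, h2, h4, Pi.smul_apply, smul_eq_mul, smul_eq_mul]
    ring
  norm_map' g := by
    obtain ⟨G, hGm, hG⟩ : ∃ G, Measurable G ∧ ⇑g =ᵐ[ν'] G := by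
      have h := (Lp.memLp g).aestronglyMeasurable
      exact ⟨h.mk _, h.stronglyMeasurable_mk.measurable, h.ae_eq_mk⟩
    show ‖(mulH_memℒp hqm hden g).toLp _‖ = ‖g‖
    rw [Lp.norm_def, Lp.norm_def]
    congr 1
    rw [eLpNorm_congr_ae (MemLp.coeFn_toLp (mulH_memℒp hqm hden g)),
      eLpNorm_two_eq, eLpNorm_two_eq, mulH_lint_coe hqm hden g hGm hG]

lemma mulHiso_coeFn (g : Lp ℂ 2 ν') :
    ⇑(mulHiso hqm hden g) =ᵐ[ν] fun x => q x * ⇑g x :=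
  MemLp.coeFn_toLp (mulH_memℒp hqm hden g)

include hqm hden in
lemma hm_ne0 (hac : ν ≪ ν') : ∀ᵐ x ∂ν, q x ≠ 0 := by
  set Z := {x : Word N | q x = 0} with hZ
  have hZm : MeasurableSet Z := hqm (measurableSet_singleton 0)
  have hZ0' : ν' Z = 0 := by
    rw [hden, withDensity_apply _ hZm]
    have : ∀ᵐ x ∂ν.restrict Z, dens q x = 0 := by
      rw [ae_restrict_iff' hZm]
      filter_upwards with x hx
      simp only [dens]
      rw [show q x = 0 from hx]
      simp
    calc ∫⁻ x in Z, dens q x ∂ν = ∫⁻ _ in Z, 0 ∂ν := lintegral_congr_ae this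
      _ = 0 := lintegral_zero
  have hZν : ν Z = 0 := hac hZ0'
  rw [ae_iff]
  convert hZν using 2
  ext x
  simp [hZ]

include hqm hden in
lemma mulHiso_surjective (hne0 : ∀ᵐ x ∂ν, q x ≠ 0) :
    Function.Surjective (mulHiso hqm hden) := by
  intro u
  obtain ⟨U, hUm, hU⟩ : ∃ U, Measurable U ∧ ⇑u =ᵐ[ν] U := by
    have h := (Lp.memLp u).aestronglyMeasurable
    exact ⟨h.mk _, h.stronglyMeasurable_mk.measurable, h.ae_eq_mk⟩
  have hν'ac : ν' ≪ ν := by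
    rw [hden]
    exact withDensity_absolutelyContinuous ν (dens q)
  set p : Word N → ℂ := fun x => U x / q x with hp
  have hpm : Measurable p := hUm.div hqm
  have hple : ∀ x, dens q x * (‖p x‖₊ : ℝ≥0∞) ^ 2 ≤ (‖U x‖₊ : ℝ≥0∞) ^ 2 := by
    intro x
    by_cases hzero : q x = 0
    · simp [hp, hzero, dens]
    · have h2 : ‖q x‖₊ * ‖U x / q x‖₊ = ‖U x‖₊ := by
        rw [← nnnorm_mul, mul_div_cancel₀ _ hzero]
      calc dens q x * (‖p x‖₊ : ℝ≥0∞) ^ 2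
          = ((‖q x‖₊ * ‖U x / q x‖₊ : NNReal) : ℝ≥0∞) ^ 2 := by
            rw [ENNReal.coe_mul, mul_pow]
            rfl
        _ ≤ (‖U x‖₊ : ℝ≥0∞) ^ 2 := by rw [h2]
  have hfin : ∫⁻ x, (‖p x‖₊ : ℝ≥0∞) ^ 2 ∂ν' < ⊤ := by
    calc ∫⁻ x, (‖p x‖₊ : ℝ≥0∞) ^ 2 ∂ν'
        = ∫⁻ x, dens q x * (‖p x‖₊ : ℝ≥0∞) ^ 2 ∂ν := by
          rw [hden, lintegral_withDensity_eq_lintegral_mul ν (measurable_dens hqm)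
            (by exact (hpm.nnnorm).coe_nnreal_ennreal.pow_const 2)]
          apply lintegral_congr
          intro x
          rfl
      _ ≤ ∫⁻ x, (‖U x‖₊ : ℝ≥0∞) ^ 2 ∂ν := lintegral_mono hple
      _ = ∫⁻ x, (‖⇑u x‖₊ : ℝ≥0∞) ^ 2 ∂ν := by
          apply lintegral_congr_ae
          filter_upwards [hU] with x hx
          rw [hx]
      _ < ⊤ := lintegral_sq_lt_top (Lp.memLp u)
  have hpmem : MemLp p 2 ν' := memℒp_two_of hpm hfin
  refine ⟨hpmem.toLp p, ?_⟩
  apply Lp.ext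
  have hcoe : ⇑(hpmem.toLp p) =ᵐ[ν'] p := MemLp.coeFn_toLp _
  filter_upwards [mulHiso_coeFn hqm hden (hpmem.toLp p),
    mulH_congr hqm hden hcoe, hne0, hU] with x h1 h2 h3 h4
  rw [h1, h2]
  show q x * (U x / q x) = ⇑u x
  rw [← mul_div_assoc, mul_div_cancel_left₀ _ h3]
  exact h4.symm

end mulh

/-- agreement on cylinder indicators extends to all of `L²`. -/
lemma W_eq_of_agree {ν ν' : Measure (Word N)} [IsFiniteMeasure ν] [IsFiniteMeasure ν']
    (V : Lp ℂ 2 ν' ≃ₗᵢ[ℂ] Lp ℂ 2 ν) (Tl : Lp ℂ 2 ν' →ₗᵢ[ℂ] Lp ℂ 2 ν)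
    (hagree : ∀ w : List (Fin N),
      V (indicatorConstLp 2 (measurableSet_cyl w) (measure_ne_top ν' _) (1:ℂ))
        = Tl (indicatorConstLp 2 (measurableSet_cyl w) (measure_ne_top ν' _) (1:ℂ)))
    (g : Lp ℂ 2 ν') : V g = Tl g := by
  have hE : Submodule.span ℂ (Set.range fun w : List (Fin N) =>
      (indicatorConstLp 2 (measurableSet_cyl w) (measure_ne_top ν' _) (1:ℂ) : Lp ℂ 2 ν'))
      ≤ LinearMap.eqLocus (V.toLinearEquiv.toLinearMap) Tl.toLinearMap := by
    rw [Submodule.span_le]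
    rintro _ ⟨w, rfl⟩
    show V _ = Tl _
    exact hagree w
  have hclosed : IsClosed
      ((LinearMap.eqLocus (V.toLinearEquiv.toLinearMap) Tl.toLinearMap : Submodule ℂ (Lp ℂ 2 ν'))
        : Set (Lp ℂ 2 ν')) := by
    have heq : ((LinearMap.eqLocus (V.toLinearEquiv.toLinearMap) Tl.toLinearMap
        : Submodule ℂ (Lp ℂ 2 ν')) : Set (Lp ℂ 2 ν')) = {x | V x = Tl x} := rfl
    rw [heq]
    exact isClosed_eq V.continuous Tl.continuous
  have h2 := Submodule.topologicalClosure_minimal _ hE hclosed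
  exact h2 (mem_closure_span ν' g)

end MonicAux

open MonicAux in
theorem monicSystem_equivalence_iff {N : ℕ} (hN : 2 ≤ N)
    (μ μ' : Measure (Word N)) [IsFiniteMeasure μ] [IsFiniteMeasure μ']
    (f f' : Fin N → Word N → ℂ)
    (hf2 : ∀ i, MemLp (f i) 2 μ) (hf2' : ∀ i, MemLp (f' i) 2 μ')
    (hac : ∀ i, μ.map (prepend i) ≪ μ) (hac' : ∀ i, μ'.map (prepend i) ≪ μ')
    (hrn : ∀ i, (μ.map (prepend i)).rnDeriv μ =ᵐ[μ]
      fun x => ENNReal.ofReal (‖f i x‖ ^ 2))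
    (hrn' : ∀ i, (μ'.map (prepend i)).rnDeriv μ' =ᵐ[μ']
      fun x => ENNReal.ofReal (‖f' i x‖ ^ 2))
    (hne : ∀ i, ∀ᵐ x ∂μ, x 0 = i → f i x ≠ 0)
    (hne' : ∀ i, ∀ᵐ x ∂μ', x 0 = i → f' i x ≠ 0)
    (S : Fin N → (Lp ℂ 2 μ →L[ℂ] Lp ℂ 2 μ))
    (S' : Fin N → (Lp ℂ 2 μ' →L[ℂ] Lp ℂ 2 μ'))
    (hS : ∀ i (g : Lp ℂ 2 μ), ⇑(S i g) =ᵐ[μ] fun x => f i x * g (shift x))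
    (hS' : ∀ i (g : Lp ℂ 2 μ'), ⇑(S' i g) =ᵐ[μ'] fun x => f' i x * g (shift x)) :
    (∃ W : Lp ℂ 2 μ' ≃ₗᵢ[ℂ] Lp ℂ 2 μ, ∀ i g, S i (W g) = W (S' i g)) ↔
      (μ ≪ μ' ∧ μ' ≪ μ ∧
        ∃ h : Word N → ℂ, Measurable h ∧
          (μ'.rnDeriv μ =ᵐ[μ] fun x => ENNReal.ofReal (‖h x‖ ^ 2)) ∧
          ∀ i, f' i =ᵐ[μ] fun x => h (shift x) / h x * f i x) := by
  have hFex : ∀ i : Fin N, ∃ G : Word N → ℂ, Measurable G ∧ f i =ᵐ[μ] G := by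
    intro i
    have h := (hf2 i).aestronglyMeasurable
    exact ⟨h.mk _, h.stronglyMeasurable_mk.measurable, h.ae_eq_mk⟩
  choose F hFm hFae using hFex
  have hFex' : ∀ i : Fin N, ∃ G : Word N → ℂ, Measurable G ∧ f' i =ᵐ[μ'] G := by
    intro i
    have h := (hf2' i).aestronglyMeasurable
    exact ⟨h.mk _, h.stronglyMeasurable_mk.measurable, h.ae_eq_mk⟩
  choose F' hFm' hFae' using hFex'
  have hmaps : ∀ i, μ.map (prepend i) = μ.withDensity (dens (F i)) := by
    intro i
    have h1 : μ.withDensity ((μ.map (prepend i)).rnDeriv μ) = μ.map (prepend i) :=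
      by haveI := Measure.haveLebesgueDecomposition_of_sigmaFinite (μ.map (prepend i)) μ
         exact Measure.withDensity_rnDeriv_eq _ _ (hac i)
    rw [← h1]
    apply withDensity_congr_ae
    filter_upwards [hrn i, hFae i] with x hx hfx
    rw [hx, hfx, ofReal_norm_sq]
    rfl
  have hmaps' : ∀ i, μ'.map (prepend i) = μ'.withDensity (dens (F' i)) := by
    intro i
    have h1 : μ'.withDensity ((μ'.map (prepend i)).rnDeriv μ') = μ'.map (prepend i) :=
      by haveI := Measure.haveLebesgueDecomposition_of_sigmaFinite (μ'.map (prepend i)) μ'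
         exact Measure.withDensity_rnDeriv_eq _ _ (hac' i)
    rw [← h1]
    apply withDensity_congr_ae
    filter_upwards [hrn' i, hFae' i] with x hx hfx
    rw [hx, hfx, ofReal_norm_sq]
    rfl
  have hnes : ∀ i, ∀ᵐ x ∂μ, x 0 = i → F i x ≠ 0 := by
    intro i
    filter_upwards [hne i, hFae i] with x h1 h2 h0
    rw [← h2]
    exact h1 h0
  have hnes' : ∀ i, ∀ᵐ x ∂μ', x 0 = i → F' i x ≠ 0 := by
    intro i
    filter_upwards [hne' i, hFae' i] with x h1 h2 h0
    rw [← h2]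
    exact h1 h0
  have hTs : ∀ i (g : Lp ℂ 2 μ), ⇑(S i g) =ᵐ[μ] fun x => F i x * g (shift x) := by
    intro i g
    filter_upwards [hS i g, hFae i] with x h1 h2
    simp only [h1, h2]
  have hTs' : ∀ i (g : Lp ℂ 2 μ'), ⇑(S' i g) =ᵐ[μ'] fun x => F' i x * g (shift x) := by
    intro i g
    filter_upwards [hS' i g, hFae' i] with x h1 h2
    simp only [h1, h2]
  constructor
  · rintro ⟨W, hW⟩
    have hWind : ∀ w (u : Lp ℂ 2 μ'), W (indLp μ' (measurableSet_cyl w) u)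
        = indLp μ (measurableSet_cyl w) (W u) :=
      fun w u => W_ind_cyl hFm hFm' hmaps hmaps' hnes' hTs hTs' W hW w u
    have hWsym : ∀ w (u : Lp ℂ 2 μ), W.symm (indLp μ (measurableSet_cyl w) u)
        = indLp μ' (measurableSet_cyl w) (W.symm u) :=
      fun w u => W_symm_ind hFm hFm' hmaps hmaps' hnes' hTs hTs' W hW w u
    obtain ⟨h₀, hm0, hae0, hden⟩ := key_measure W hWind
    obtain ⟨h₁, hm1, hae1, hden1⟩ := key_measure W.symm hWsym
    have hac_mu' : μ' ≪ μ := by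
      rw [hden]; exact withDensity_absolutelyContinuous _ _
    have hac_mu : μ ≪ μ' := by
      rw [hden1]; exact withDensity_absolutelyContinuous _ _
    refine ⟨hac_mu, hac_mu', h₀, hm0, ?_, ?_⟩
    · rw [hden]
      filter_upwards [Measure.rnDeriv_withDensity μ (measurable_dens hm0)] with x hx
      rw [hx]
      exact (ofReal_norm_sq _).symm
    · intro i
      have hne0 : ∀ᵐ x ∂μ, h₀ x ≠ 0 := hm_ne0 hm0 hden hac_mu
      have hWT : ∀ g, W g = mulHiso hm0 hden g := by
        intro g
        apply W_eq_of_agree W (mulHiso hm0 hden) ?_ g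
        intro w
        have hInd : W (indicatorConstLp 2 (measurableSet_cyl w) (measure_ne_top μ' _) (1:ℂ))
            = indLp μ (measurableSet_cyl w) (W (oneLp μ')) := by
          rw [← indLp_one_eq μ' (measurableSet_cyl w), hWind]
        rw [hInd]
        apply Lp.ext
        filter_upwards [indLp_coeFn μ (measurableSet_cyl w) (W (oneLp μ')), hae0,
          mulHiso_coeFn hm0 hden
            (indicatorConstLp 2 (measurableSet_cyl w) (measure_ne_top μ' _) (1:ℂ)),
          mulH_congr hm0 hden (indicatorConstLp_coeFn (p := 2) (hs := measurableSet_cyl w)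
            (hμs := measure_ne_top μ' _) (c := (1:ℂ)))] with x h1 h2 h3 h4
        rw [h1, h3, h4]
        by_cases hx : x ∈ cyl w
        · rw [Set.indicator_of_mem hx, Set.indicator_of_mem hx, h2, mul_one]
        · rw [Set.indicator_of_notMem hx, Set.indicator_of_notMem hx, mul_zero]
      have hkey : (fun x => h₀ x * F' i x) =ᵐ[μ] fun x => F i x * h₀ (shift x) := by
        have e1 : ⇑(S' i (oneLp μ')) =ᵐ[μ'] F' i := by
          filter_upwards [hTs' i (oneLp μ'),
            mul_shift_congr (hFm' i) (hmaps' i) (oneLp_coeFn μ')] with x hx1 hx2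
          simp only [hx1, hx2]
          simp
        have e2 : ⇑(W (S' i (oneLp μ'))) =ᵐ[μ] fun x => h₀ x * F' i x := by
          rw [hWT]
          filter_upwards [mulHiso_coeFn hm0 hden (S' i (oneLp μ')),
            mulH_congr hm0 hden e1] with x hx1 hx2
          simp only [hx1, hx2]
        have e3 : ⇑(S i (W (oneLp μ'))) =ᵐ[μ] fun x => F i x * h₀ (shift x) := by
          filter_upwards [hTs i (W (oneLp μ')),
            mul_shift_congr (hFm i) (hmaps i) hae0] with x hx1 hx2
          simp only [hx1, hx2]
        have e4 : S i (W (oneLp μ')) = W (S' i (oneLp μ')) := hW i (oneLp μ')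
        have e5 : ⇑(W (S' i (oneLp μ'))) =ᵐ[μ] fun x => F i x * h₀ (shift x) := by
          rw [← e4]
          exact e3
        exact e2.symm.trans e5
      filter_upwards [hkey, hne0, hFae i, (hFae' i).filter_mono hac_mu.ae_le]
        with x h1 h2 h3 h4
      rw [h4, h3]
      field_simp
      linear_combination h1
  · rintro ⟨hac1, hac2, h, hmeas, hrd, hff'⟩
    have hden : μ' = μ.withDensity (dens h) := by
      have h1 : μ.withDensity (μ'.rnDeriv μ) = μ' := by
        haveI := Measure.haveLebesgueDecomposition_of_sigmaFinite μ' μ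
        exact Measure.withDensity_rnDeriv_eq _ _ hac2
      rw [← h1]
      apply withDensity_congr_ae
      filter_upwards [hrd] with x hx
      rw [hx, ofReal_norm_sq]
      rfl
    have hne0 : ∀ᵐ x ∂μ, h x ≠ 0 := hm_ne0 hmeas hden hac1
    have hsurj := mulHiso_surjective hmeas hden hne0
    set W := LinearIsometryEquiv.ofSurjective (mulHiso hmeas hden) hsurj with hWdef
    have hWcoe : ∀ g, W g = mulHiso hmeas hden g := fun g =>
      congrFun (LinearIsometryEquiv.coe_ofSurjective (mulHiso hmeas hden) hsurj) g
    refine ⟨W, ?_⟩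
    intro i g
    apply Lp.ext
    have hWg : ⇑(W g) =ᵐ[μ] fun x => h x * ⇑g x := by
      rw [hWcoe g]
      exact mulHiso_coeFn hmeas hden g
    have l1 : ⇑(S i (W g)) =ᵐ[μ] fun x => F i x * (h (shift x) * ⇑g (shift x)) := by
      filter_upwards [hTs i (W g), mul_shift_congr (hFm i) (hmaps i) hWg] with x h1 h2
      simp only [h1, h2]
    have l3 : ⇑(W (S' i g)) =ᵐ[μ] fun x => h x * (F' i x * ⇑g (shift x)) := by
      have hc := mulH_congr hmeas hden (hTs' i g)
      have l2 : ⇑(W (S' i g)) =ᵐ[μ] fun x => h x * ⇑(S' i g) x := by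
        rw [hWcoe (S' i g)]
        exact mulHiso_coeFn hmeas hden (S' i g)
      filter_upwards [l2, hc] with x h1 h2
      simp only [h1, h2]
    have hff2 : F' i =ᵐ[μ] fun x => h (shift x) / h x * F i x := by
      filter_upwards [hff' i, hFae i, (hFae' i).filter_mono hac1.ae_le] with x h1 h2 h3
      rw [← h3, h1, h2]
    filter_upwards [l1, l3, hff2, hne0] with x h1 h2 h3 h4
    rw [h1, h2, h3]
    field_simp
end
end
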